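/- arXiv:math/0702891 — 5 statements merged into one kernel-verified Lean document; each statement's English description precedes it below -/
import Mathlib

section
/- Let f ∈ ℝ[x] be a polynomial and let V(f) denote the number of sign changes in the ordered sequence of nonzero coefficients of f (listed from the leading coefficient down). Then V((x+1)·f) ≤ V(f). -/
open Polynomial

/-- The number of sign changes in the ordered sequence of nonzero coefficients of `f`. -/
noncomputable def signChanges (f : Polynomial ℝ) : ℕ :=
  let l := (f.support.sort (· ≤ ·)).map f.coeff
  (l.zip l.tail).countP (fun p => decide (p.1 * p.2 < 0))

/-- `V f` is the number of sign changes, with the convention `V 0 = -2`. -/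
noncomputable def V (f : Polynomial ℝ) : ℤ :=
  if f = 0 then -2 else signChanges f

/-! ### Auxiliary list-level machinery -/

noncomputable def changes (l : List ℝ) : ℕ :=
  (l.zip l.tail).countP (fun p => decide (p.1 * p.2 < 0))

@[simp] lemma changes_nil : changes [] = 0 := rfl
@[simp] lemma changes_singleton (a : ℝ) : changes [a] = 0 := rfl

lemma changes_cons_cons (a b : ℝ) (l : List ℝ) :
    changes (a :: b :: l) = changes (b :: l) + (if a * b < 0 then 1 else 0) := by
  simp only [changes, List.tail_cons, List.zip_cons_cons, List.countP_cons, decide_eq_true_eq]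

lemma changes_le_cons (a : ℝ) (l : List ℝ) : changes l ≤ changes (a :: l) := by
  cases l with
  | nil => simp
  | cons b l => rw [changes_cons_cons]; omega

lemma changes_cons_le (a : ℝ) (l : List ℝ) : changes (a :: l) ≤ 1 + changes l := by
  cases l with
  | nil => simp
  | cons b l => rw [changes_cons_cons]; split <;> omega

lemma changes_cons_eq_of_sign {a b : ℝ} (h : 0 < a * b) (l : List ℝ) :
    changes (a :: l) = changes (b :: l) := by
  cases l with
  | nil => simp
  | cons c l =>
    rw [changes_cons_cons, changes_cons_cons]
    congr 1
    have : a * c < 0 ↔ b * c < 0 := by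
      rcases mul_pos_iff.mp h with ⟨ha, hb⟩ | ⟨ha, hb⟩
      · constructor <;> intro h' <;> nlinarith [mul_pos ha hb]
      · constructor <;> intro h' <;> nlinarith
    simp [this]

lemma changes_zero_cons (l : List ℝ) : changes ((0:ℝ) :: l) = changes l := by
  cases l with
  | nil => rw [changes_singleton, changes_nil]
  | cons b l => rw [changes_cons_cons]; simp

/-- `SignSub u v` : the signs of `u` form a (weakly monotone, repetition-allowed)
subsequence of the signs of `v`. -/
inductive SignSub : List ℝ → List ℝ → Prop
  | nil (v) : SignSub [] v
  | mtch {x y u v} : 0 < x * y → SignSub u (y :: v) → SignSub (x :: u) (y :: v)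
  | skip {u v} (y) : SignSub u v → SignSub u (y :: v)

lemma signSub_changes {u v : List ℝ} (h : SignSub u v) (hv : ∀ y ∈ v, y ≠ 0) :
    changes u ≤ changes v ∧ ∀ a : ℝ, changes (a :: u) ≤ changes (a :: v) := by
  induction h with
  | nil v =>
    refine ⟨by rw [changes_nil]; exact Nat.zero_le _, fun a => ?_⟩
    rw [changes_singleton]; exact Nat.zero_le _
  | mtch hxy h ih =>
    rename_i x y u v
    obtain ⟨ih1, ih2⟩ := ih hv
    constructor
    · calc changes (x :: u) ≤ changes (x :: y :: v) := ih2 x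
        _ = changes (y :: v) + (if x * y < 0 then 1 else 0) := changes_cons_cons ..
        _ = changes (y :: v) := by simp [not_lt.mpr (le_of_lt hxy)]
    · intro a
      calc changes (a :: x :: u) = changes (x :: u) + (if a * x < 0 then 1 else 0) :=
            changes_cons_cons ..
        _ ≤ changes (y :: v) + (if a * x < 0 then 1 else 0) := by
            gcongr
            calc changes (x :: u) ≤ changes (x :: y :: v) := ih2 x
              _ = changes (y :: v) := by
                  rw [changes_cons_cons]; simp [not_lt.mpr (le_of_lt hxy)]
        _ = changes (y :: v) + (if a * y < 0 then 1 else 0) := by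
            congr 1
            have : a * x < 0 ↔ a * y < 0 := by
              rcases mul_pos_iff.mp hxy with ⟨hx, hy⟩ | ⟨hx, hy⟩
              · constructor <;> intro h' <;> nlinarith
              · constructor <;> intro h' <;> nlinarith
            simp [this]
        _ = changes (a :: y :: v) := (changes_cons_cons ..).symm
  | skip y h ih =>
    rename_i u v
    have hy : y ≠ 0 := hv y (List.mem_cons_self ..)
    have hv' : ∀ z ∈ v, z ≠ 0 := fun z hz => hv z (List.mem_cons_of_mem _ hz)
    obtain ⟨ih1, ih2⟩ := ih hv'
    refine ⟨le_trans ih1 (changes_le_cons _ _), fun a => ?_⟩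
    rcases lt_trichotomy (a * y) 0 with hay | hay | hay
    · calc changes (a :: u) ≤ 1 + changes u := changes_cons_le ..
        _ ≤ 1 + changes v := by omega
        _ ≤ 1 + changes (y :: v) := by have := changes_le_cons y v; omega
        _ = changes (a :: y :: v) := by rw [changes_cons_cons]; simp [hay]; omega
    · have : a = 0 := by
        rcases mul_eq_zero.mp hay with h | h
        · exact h
        · exact absurd h hy
      subst this
      calc changes (0 :: u) = changes u := changes_zero_cons u
        _ ≤ changes v := ih1
        _ ≤ changes (y :: v) := changes_le_cons ..
        _ = changes (0 :: y :: v) := (changes_zero_cons _).symm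
    · calc changes (a :: u) ≤ changes (a :: v) := ih2 a
        _ = changes (y :: v) := changes_cons_eq_of_sign hay v
        _ = changes (a :: y :: v) := by rw [changes_cons_cons]; simp [not_lt.mpr (le_of_lt hay)]

noncomputable def fNZ (l : List ℝ) : List ℝ := l.filter (fun x => decide (x ≠ 0))

@[simp] lemma fNZ_nil : fNZ [] = [] := rfl
lemma fNZ_cons_ne {x : ℝ} (h : x ≠ 0) (l : List ℝ) : fNZ (x :: l) = x :: fNZ l := by
  simp [fNZ, h]
lemma fNZ_cons_zero (l : List ℝ) : fNZ ((0:ℝ) :: l) = fNZ l := by simp [fNZ]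
lemma fNZ_ne_zero {x : ℝ} {l : List ℝ} (h : x ∈ fNZ l) : x ≠ 0 := by
  simp [fNZ] at h; exact h.2

lemma signSub_refl {l : List ℝ} (h : ∀ x ∈ l, x ≠ 0) : SignSub l l := by
  induction l with
  | nil => exact SignSub.nil _
  | cons x l ih =>
    have hx : x ≠ 0 := h x (List.mem_cons_self ..)
    exact SignSub.mtch (mul_self_pos.mpr hx)
      (SignSub.skip _ (ih fun y hy => h y (List.mem_cons_of_mem _ hy)))

noncomputable def convAux (p : ℝ) (l : List ℝ) : List ℝ :=
  List.zipWith (· + ·) (p :: l) (l ++ [0])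

@[simp] lemma convAux_nil (p : ℝ) : convAux p [] = [p] := by simp [convAux]
@[simp] lemma convAux_cons (p x : ℝ) (l : List ℝ) :
    convAux p (x :: l) = (p + x) :: convAux x l := by simp [convAux]

lemma signSub_conv (p : ℝ) (l : List ℝ) : SignSub (fNZ (convAux p l)) (fNZ (p :: l)) := by
  induction l generalizing p with
  | nil =>
    rw [convAux_nil]
    exact signSub_refl (fun x hx => fNZ_ne_zero hx)
  | cons x l ih =>
    rw [convAux_cons]
    rcases eq_or_ne (p + x) 0 with hpx | hpx
    · rw [show p + x = (0:ℝ) from hpx, fNZ_cons_zero]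
      rcases eq_or_ne p 0 with rfl | hp
      · rw [fNZ_cons_zero]; exact ih x
      · rw [fNZ_cons_ne hp]; exact SignSub.skip _ (ih x)
    · rw [fNZ_cons_ne hpx]
      by_cases hx : 0 < (p + x) * x
      · have hx0 : x ≠ 0 := by intro h; rw [h, mul_zero] at hx; exact lt_irrefl _ hx
        rcases eq_or_ne p 0 with rfl | hp
        · rw [fNZ_cons_zero, fNZ_cons_ne hx0]
          exact SignSub.mtch hx (by rw [← fNZ_cons_ne hx0]; exact ih x)
        · rw [fNZ_cons_ne hp, fNZ_cons_ne hx0]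
          exact SignSub.skip _ (SignSub.mtch hx (by rw [← fNZ_cons_ne hx0]; exact ih x))
      · have hpp : 0 < (p + x) * p := by
          rcases lt_trichotomy (p + x) 0 with h | h | h
          · nlinarith [not_lt.mp hx]
          · exact absurd h hpx
          · nlinarith [not_lt.mp hx]
        have hp : p ≠ 0 := by intro h; rw [h, mul_zero] at hpp; exact lt_irrefl _ hpp
        rw [fNZ_cons_ne hp]
        exact SignSub.mtch hpp (SignSub.skip _ (ih x))

/-! ### Bridge between polynomials and lists -/

lemma sort_support_map (f : ℝ[X]) (N : ℕ) (hN : ∀ i ∈ f.support, i < N) :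
    (f.support.sort (· ≤ ·)).map f.coeff = fNZ ((List.range N).map f.coeff) := by
  rw [fNZ, List.filter_map]
  congr 1
  refine (fun hp h1 h2 => List.Perm.eq_of_pairwise' (r := (· ≤ ·)) h1 h2 hp) ?_ ?_ ?_
  · apply List.perm_of_nodup_nodup_toFinset_eq
    · exact f.support.sort_nodup _
    · exact (List.nodup_range (n := N)).filter _
    · ext i
      simp only [List.mem_toFinset, Finset.mem_sort, List.mem_filter, List.mem_range,
        Function.comp_apply, decide_eq_true_eq, mem_support_iff]
      constructor
      · intro h; exact ⟨hN i (mem_support_iff.mpr h), h⟩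
      · intro h; exact h.2
  · exact f.support.pairwise_sort _
  · exact ((List.pairwise_le_range (n := N)).sublist List.filter_sublist)

lemma coeff_list_conv (f : ℝ[X]) (N : ℕ) (hN : f.natDegree < N) :
    (List.range (N + 1)).map ((X + 1) * f).coeff
      = convAux 0 ((List.range N).map f.coeff) := by
  have hg : ∀ i, ((X + 1) * f).coeff i = (X * f).coeff i + f.coeff i := by
    intro i
    rw [add_mul, one_mul, coeff_add]
  apply List.ext_getElem
  · simp [convAux]
  · intro i hi hi'
    simp only [List.length_map, List.length_range] at hi
    simp only [convAux, List.getElem_map, List.getElem_range, List.getElem_zipWith]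
    rcases Nat.eq_zero_or_pos i with rfl | hpos
    · simp only [List.getElem_cons_zero, hg, Polynomial.mul_coeff_zero, coeff_X_zero, zero_mul,
        zero_add]
      rw [List.getElem_append_left (by simpa using Nat.pos_of_ne_zero (by omega))]
      simp
    · obtain ⟨j, rfl⟩ : ∃ j, i = j + 1 := ⟨i - 1, by omega⟩
      rw [List.getElem_cons_succ, List.getElem_map, List.getElem_range, hg, coeff_X_mul]
      congr 1
      by_cases hjN : j + 1 < N
      · rw [List.getElem_append_left (by simpa using hjN)]
        simp
      · have hj1 : j + 1 = N := by omega
        rw [List.getElem_append_right (by simp; omega)]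
        have h0 : f.coeff (j + 1) = 0 := coeff_eq_zero_of_natDegree_lt (by omega)
        simp [h0]

lemma signChanges_eq_changes (f : ℝ[X]) :
    signChanges f = changes ((f.support.sort (· ≤ ·)).map f.coeff) := rfl

theorem sign_changes_mul_X_add_one (f : Polynomial ℝ) :
    V ((X + 1) * f) ≤ V f := by
  rcases eq_or_ne f 0 with rfl | hf
  · simp [V]
  · have hX1 : (X + 1 : ℝ[X]) ≠ 0 := by
      have := Polynomial.monic_X_add_C (1 : ℝ)
      rw [Polynomial.C_1] at this
      exact this.ne_zero
    have hg : (X + 1) * f ≠ 0 := mul_ne_zero hX1 hf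
    rw [V, V, if_neg hg, if_neg hf, Nat.cast_le]
    set N := f.natDegree + 1 with hNdef
    have hNf : f.natDegree < N := Nat.lt_succ_self _
    have hsf : ∀ i ∈ f.support, i < N := fun i hi =>
      Nat.lt_succ_of_le (le_natDegree_of_mem_supp i hi)
    have hdg : ((X + 1) * f).natDegree ≤ N := by
      calc ((X + 1) * f).natDegree ≤ (X + 1 : ℝ[X]).natDegree + f.natDegree :=
            natDegree_mul_le
        _ ≤ 1 + f.natDegree := by
            gcongr
            calc (X + 1 : ℝ[X]).natDegree ≤ max (X : ℝ[X]).natDegree (1 : ℝ[X]).natDegree :=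
                  natDegree_add_le _ _
              _ ≤ 1 := by simp
        _ = N := by omega
    have hsg : ∀ i ∈ ((X + 1) * f).support, i < N + 1 := fun i hi =>
      Nat.lt_succ_of_le (le_trans (le_natDegree_of_mem_supp i hi) hdg)
    rw [signChanges_eq_changes, signChanges_eq_changes,
      sort_support_map _ _ hsf, sort_support_map _ _ hsg,
      coeff_list_conv _ _ hNf]
    set A := (List.range N).map f.coeff with hA
    have hsub : SignSub (fNZ (convAux 0 A)) (fNZ A) := by
      have := signSub_conv 0 A
      rwa [fNZ_cons_zero] at this
    exact (signSub_changes hsub (fun y hy => fNZ_ne_zero hy)).1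
end

section
/- Let f, g ∈ ℝ[x] and suppose g has at most t nonzero terms. Then V(f + g) ≤ V(f) + 2t, where V denotes the number of sign changes in the coefficient sequence, with the convention V(0) = -2. -/
open Polynomial

namespace VAux

/-- sign change count of a list of reals -/
noncomputable def sc (l : List ℝ) : ℕ :=
  (l.zip l.tail).countP (fun p => decide (p.1 * p.2 < 0))

lemma signChanges_eq_sc (f : Polynomial ℝ) :
    signChanges f = sc ((f.support.sort (· ≤ ·)).map f.coeff) := rfl

lemma sc_cons (a : ℝ) (l : List ℝ) :
    sc (a :: l) = sc l + (if a * l.headD 0 < 0 then 1 else 0) := by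
  cases l with
  | nil => simp [sc]
  | cons b l' => simp [sc, List.countP_cons]

lemma sc_insert_le (a : ℝ) (l₂ : List ℝ) : ∀ l₁ : List ℝ,
    sc (l₁ ++ a :: l₂) ≤ sc (l₁ ++ l₂) + 2 := by
  intro l₁
  induction l₁ with
  | nil =>
    simp only [List.nil_append]
    rw [sc_cons]
    split_ifs <;> omega
  | cons x l₁' ih =>
    cases l₁' with
    | nil =>
      simp only [List.cons_append, List.nil_append]
      rw [sc_cons x (a :: l₂), sc_cons a l₂, sc_cons x l₂]
      rw [List.headD_cons]
      split_ifs <;> omega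
    | cons y l₁'' =>
      simp only [List.cons_append] at *
      rw [sc_cons x, sc_cons x]
      rw [List.headD_cons, List.headD_cons]
      omega

lemma sign_aux {x a h : ℝ} (ha : a ≠ 0) (hxh : x * h < 0) (hah : ¬ a * h < 0) : x * a < 0 := by
  have hh : h ≠ 0 := by rintro rfl; simp at hxh
  have hah' : 0 < a * h := lt_of_le_of_ne (not_lt.1 hah) (Ne.symm (mul_ne_zero ha hh))
  have h1 : x * h * (a * h) < 0 := mul_neg_of_neg_of_pos hxh hah'
  nlinarith [mul_self_pos.2 hh]

lemma sc_delete_le (a : ℝ) (ha : a ≠ 0) (l₂ : List ℝ) : ∀ l₁ : List ℝ,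
    sc (l₁ ++ l₂) ≤ sc (l₁ ++ a :: l₂) := by
  intro l₁
  induction l₁ with
  | nil =>
    simp only [List.nil_append]
    rw [sc_cons]
    omega
  | cons x l₁' ih =>
    cases l₁' with
    | nil =>
      simp only [List.cons_append, List.nil_append]
      rw [sc_cons x l₂, sc_cons x (a :: l₂), sc_cons a l₂]
      rw [List.headD_cons]
      have key : (if x * l₂.headD 0 < 0 then 1 else 0)
          ≤ (if a * l₂.headD 0 < 0 then (1:ℕ) else 0) + (if x * a < 0 then 1 else 0) := by
        split_ifs <;>
          first
            | omega
            | (rename_i h1 h2 h3; exact absurd (sign_aux ha h1 h2) h3)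
      omega
    | cons y l₁'' =>
      simp only [List.cons_append] at *
      rw [sc_cons x, sc_cons x]
      rw [List.headD_cons, List.headD_cons]
      omega

open List in
lemma sort_erase_decomp (s : Finset ℕ) (n : ℕ) (hn : n ∈ s) :
    ∃ (l₁ l₂ : List ℕ), s.sort (· ≤ ·) = l₁ ++ n :: l₂ ∧
      (s.erase n).sort (· ≤ ·) = l₁ ++ l₂ := by
  have hmem : n ∈ s.sort (· ≤ ·) := (Finset.mem_sort _).2 hn
  obtain ⟨l₁, l₂, h⟩ := List.append_of_mem hmem
  refine ⟨l₁, l₂, h, ?_⟩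
  have h1 : s.sort (· ≤ ·) ~ n :: ((s.erase n).sort (· ≤ ·)) := by
    calc s.sort (· ≤ ·) ~ s.toList := Finset.sort_perm_toList _ _
      _ = (insert n (s.erase n)).toList := by rw [Finset.insert_erase hn]
      _ ~ n :: (s.erase n).toList := Finset.toList_insert (Finset.notMem_erase n s)
      _ ~ n :: (s.erase n).sort (· ≤ ·) := ((Finset.sort_perm_toList _ _).symm.cons n)
  have h2 : (l₁ ++ n :: l₂ : List ℕ) ~ n :: (l₁ ++ l₂) := List.perm_middle
  have hperm : (s.erase n).sort (· ≤ ·) ~ l₁ ++ l₂ :=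
    (h1.symm.trans (h ▸ h2)).cons_inv
  refine List.Perm.eq_of_pairwise' (Finset.pairwise_sort _ _) ?_ hperm
  have hsub : (l₁ ++ l₂) <+ (l₁ ++ n :: l₂) :=
    (List.sublist_cons_self n l₂).append_left l₁
  have hsorted : (l₁ ++ n :: l₂).Pairwise (· ≤ ·) := h ▸ Finset.pairwise_sort s _
  exact hsorted.sublist hsub

lemma sc_key (f : Polynomial ℝ) (c : ℝ) (n : ℕ) :
    signChanges (f + C c * X ^ n) ≤ signChanges f + 2 := by
  set g := f + C c * X ^ n with hg
  have hcoeff : ∀ m, m ≠ n → g.coeff m = f.coeff m := by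
    intro m hm
    simp [hg, coeff_C_mul, coeff_X_pow, hm]
  have hsupp : g.support.erase n = f.support.erase n := by
    ext m
    simp only [Finset.mem_erase, mem_support_iff]
    constructor
    · rintro ⟨hm, h0⟩; exact ⟨hm, by rwa [← hcoeff m hm]⟩
    · rintro ⟨hm, h0⟩; exact ⟨hm, by rwa [hcoeff m hm]⟩
  rw [signChanges_eq_sc, signChanges_eq_sc]
  have hmapeq : ((g.support.erase n).sort (· ≤ ·)).map g.coeff
      = ((f.support.erase n).sort (· ≤ ·)).map f.coeff := by
    rw [hsupp]
    refine List.map_congr_left ?_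
    intro m hm
    have : m ∈ f.support.erase n := (Finset.mem_sort _).1 hm
    exact hcoeff m (Finset.mem_erase.1 this).1
  have step1 : sc ((g.support.sort (· ≤ ·)).map g.coeff)
      ≤ sc (((g.support.erase n).sort (· ≤ ·)).map g.coeff) + 2 := by
    by_cases hn : n ∈ g.support
    · obtain ⟨l₁, l₂, h1, h2⟩ := sort_erase_decomp g.support n hn
      rw [h1, h2, List.map_append, List.map_append, List.map_cons]
      exact sc_insert_le _ _ _
    · rw [Finset.erase_eq_of_notMem hn]; omega
  have step3 : sc (((f.support.erase n).sort (· ≤ ·)).map f.coeff)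
      ≤ sc ((f.support.sort (· ≤ ·)).map f.coeff) := by
    by_cases hn : n ∈ f.support
    · obtain ⟨l₁, l₂, h1, h2⟩ := sort_erase_decomp f.support n hn
      rw [h1, h2, List.map_append, List.map_append, List.map_cons]
      exact sc_delete_le _ (mem_support_iff.1 hn) _ _
    · rw [Finset.erase_eq_of_notMem hn]
  calc sc ((g.support.sort (· ≤ ·)).map g.coeff)
      ≤ sc (((g.support.erase n).sort (· ≤ ·)).map g.coeff) + 2 := step1
    _ = sc (((f.support.erase n).sort (· ≤ ·)).map f.coeff) + 2 := by rw [hmapeq]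
    _ ≤ sc ((f.support.sort (· ≤ ·)).map f.coeff) + 2 := by omega

lemma V_add_single (f : Polynomial ℝ) (c : ℝ) (n : ℕ) :
    V (f + C c * X ^ n) ≤ V f + 2 := by
  by_cases hf : f = 0
  · subst hf
    by_cases hc : c = 0
    · simp [V, hc]
    · have hne : C c * X ^ n ≠ 0 := by
        rw [C_mul_X_pow_eq_monomial]
        intro h
        exact hc (by simpa using congrArg (fun p => Polynomial.coeff p n) h)
      have hsc : signChanges (C c * X ^ n) = 0 := by
        rw [signChanges_eq_sc, support_C_mul_X_pow n hc, Finset.sort_singleton]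
        rfl
      simp [V, hne, hsc]
  · by_cases hgz : f + C c * X ^ n = 0
    · rw [hgz]
      have h0 : V (0 : Polynomial ℝ) = -2 := by simp [V]
      rw [h0, V, if_neg hf]
      have : (0 : ℤ) ≤ (signChanges f : ℤ) := Int.ofNat_nonneg _
      linarith
    · rw [V, V, if_neg hf, if_neg hgz]
      have h := sc_key f c n
      have h2 : (signChanges (f + C c * X ^ n) : ℤ) ≤ (signChanges f : ℤ) + 2 := by
        exact_mod_cast h
      linarith

end VAux

theorem V_add_le (f g : Polynomial ℝ) (t : ℕ) (hg : g.support.card ≤ t) :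
    V (f + g) ≤ V f + 2 * t := by
  induction t generalizing g with
  | zero =>
    have : g.support = ∅ := Finset.card_eq_zero.1 (Nat.le_zero.1 hg)
    have hg0 : g = 0 := Polynomial.support_eq_empty.1 this
    simp [hg0]
  | succ t ih =>
    by_cases hg0 : g = 0
    · subst hg0
      simp only [add_zero]
      have h2 : (0 : ℤ) ≤ 2 * ((t : ℤ) + 1) := by positivity
      push_cast
      linarith
    · have hmem : g.natDegree ∈ g.support := natDegree_mem_support_of_nonzero hg0
      set n := g.natDegree with hn
      have hdecomp : g = g.erase n + C (g.coeff n) * X ^ n := by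
        rw [C_mul_X_pow_eq_monomial, add_comm]
        exact (Polynomial.monomial_add_erase g n).symm
      have hcard : (g.erase n).support.card ≤ t := by
        rw [Polynomial.support_erase, Finset.card_erase_of_mem hmem]
        have : 1 ≤ g.support.card := Finset.card_pos.2 ⟨n, hmem⟩
        omega
      calc V (f + g) = V ((f + g.erase n) + C (g.coeff n) * X ^ n) := by
            conv_lhs => rw [hdecomp, ← add_assoc]
        _ ≤ V (f + g.erase n) + 2 := VAux.V_add_single _ _ _
        _ ≤ (V f + 2 * t) + 2 := by linarith [ih (g.erase n) hcard]
        _ = V f + 2 * ((t : ℕ) + 1 : ℕ) := by push_cast; ring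
end

section
/- Let f ∈ ℝ[x,y] be a polynomial with at most t nonzero terms. Then the univariate polynomial f(x, x+1) ∈ ℝ[x] has at most 2t-2 sign changes in its coefficient sequence, i.e., V(f(x, x+1)) ≤ 2t-2. -/
open Polynomial

/-- `l` is a strictly increasing list of indices at which the coefficients of `g`
are nonzero and alternate in sign. -/
def AltOf (g : ℝ[X]) (l : List ℕ) : Prop :=
  l.Chain' (· < ·) ∧ (l.map g.coeff).Chain' (fun a b => a * b < 0) ∧ ∀ i ∈ l, g.coeff i ≠ 0

lemma coeff_X_add_one_mul (h : ℝ[X]) (k : ℕ) :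
    ((X + 1) * h).coeff k = (if k = 0 then 0 else h.coeff (k - 1)) + h.coeff k := by
  rw [add_mul, one_mul, coeff_add]
  cases k with
  | zero => simp
  | succ n => simp [coeff_X_mul]

lemma exists_sign_witness (h : ℝ[X]) (k : ℕ) (hk : ((X + 1) * h).coeff k ≠ 0) :
    ∃ m : ℕ, (m = k ∨ m + 1 = k) ∧ h.coeff m * ((X + 1) * h).coeff k > 0 := by
  rcases lt_trichotomy (h.coeff k * ((X + 1) * h).coeff k) 0 with hlt | heq | hgt
  · -- then the other coefficient must share the sign
    cases k with
    | zero =>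
      exfalso
      rw [coeff_X_add_one_mul] at hlt
      simp at hlt
      nlinarith
    | succ n =>
      refine ⟨n, Or.inr rfl, ?_⟩
      have e := coeff_X_add_one_mul h (n + 1)
      simp at e
      have key : h.coeff n * ((X + 1) * h).coeff (n + 1)
          = ((X + 1) * h).coeff (n + 1) * ((X + 1) * h).coeff (n + 1)
            - h.coeff (n + 1) * ((X + 1) * h).coeff (n + 1) := by
        rw [e]; ring
      have pos := mul_self_pos.mpr hk
      linarith
  · -- h.coeff k = 0
    have h0 : h.coeff k = 0 := by
      rcases mul_eq_zero.mp heq with h1 | h1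
      · exact h1
      · exact absurd h1 hk
    cases k with
    | zero =>
      exfalso
      apply hk
      rw [coeff_X_add_one_mul]
      simp [h0]
    | succ n =>
      refine ⟨n, Or.inr rfl, ?_⟩
      have e := coeff_X_add_one_mul h (n + 1)
      simp at e
      rw [e, h0, add_zero]
      exact mul_self_pos.mpr (by rw [e, h0, add_zero] at hk; exact hk)
  · exact ⟨k, Or.inl rfl, hgt⟩


lemma sign_trans {a b c d : ℝ} (h1 : a * b > 0) (h2 : c * d > 0) (h3 : b * d < 0) :
    a * c < 0 := by nlinarith [mul_pos h1 h2]

lemma altOf_of_X_add_one_mul (h : ℝ[X]) :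
    ∀ l : List ℕ, AltOf ((X + 1) * h) l →
      ∃ l' : List ℕ, AltOf h l' ∧ l'.length = l.length ∧
        (∀ k, l.head? = some k → ∃ m, l'.head? = some m ∧ m ≤ k ∧ k ≤ m + 1 ∧
          h.coeff m * ((X + 1) * h).coeff k > 0) := by
  intro l
  induction l with
  | nil => exact fun _ => ⟨[], ⟨List.isChain_nil, List.isChain_nil, by simp⟩, rfl, by simp⟩
  | cons k rest ih =>
    rintro ⟨hc, ha, hnz⟩
    have hrest : AltOf ((X + 1) * h) rest := by
      refine ⟨hc.tail, ?_, fun i hi => hnz i (List.mem_cons_of_mem _ hi)⟩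
      have := ha.tail
      simpa [List.Chain'] using this
    obtain ⟨l'', alt'', len'', head''⟩ := ih hrest
    have hknz : ((X + 1) * h).coeff k ≠ 0 := hnz k (List.mem_cons_self)
    obtain ⟨m, hm, hsgn⟩ := exists_sign_witness h k hknz
    have hmk : m ≤ k := by rcases hm with rfl | rfl <;> omega
    have hkm : k ≤ m + 1 := by rcases hm with rfl | rfl <;> omega
    have hmnz : h.coeff m ≠ 0 := by
      intro h0; rw [h0, zero_mul] at hsgn; exact lt_irrefl 0 hsgn
    cases rest with
    | nil =>
      refine ⟨[m], ⟨by simp [List.Chain'], by simp [List.Chain'], by simpa using hmnz⟩, by simp [len''], ?_⟩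
      intro k' hk'
      simp at hk'
      subst hk'
      exact ⟨m, rfl, hmk, hkm, hsgn⟩
    | cons k' rest' =>
      obtain ⟨m', hm'head, hm'le, hm'ge, hsgn'⟩ := head'' k' rfl
      have hkk' : k < k' := (List.isChain_cons_cons.mp hc).1
      have hgg' : ((X + 1) * h).coeff k * ((X + 1) * h).coeff k' < 0 := by
        have := (List.isChain_cons_cons.mp ha).1
        simpa using (List.isChain_cons_cons.mp ha).1
      have hmm' : m < m' := by
        rcases lt_or_ge m m' with hlt | hge
        · exact hlt
        · exfalso
          have hmm : m = m' := by omega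
          subst hmm
          nlinarith [mul_pos hsgn hsgn', mul_self_nonneg (h.coeff m)]
      have hhh' : h.coeff m * h.coeff m' < 0 := sign_trans hsgn hsgn' hgg'
      refine ⟨m :: l'', ⟨?_, ?_, ?_⟩, by simp [len''], ?_⟩
      · unfold List.Chain'
        rw [List.isChain_cons]
        refine ⟨fun b hb => ?_, alt''.1⟩
        rw [hm'head] at hb
        simp at hb
        omega
      · unfold List.Chain'
        rw [List.map_cons, List.isChain_cons]
        refine ⟨fun b hb => ?_, alt''.2.1⟩
        have : (l''.map h.coeff).head? = some (h.coeff m') := by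
          cases l'' with
          | nil => simp at hm'head
          | cons x xs =>
            simp at hm'head
            simp [hm'head]
        rw [this] at hb
        simp at hb
        subst hb
        exact hhh'
      · intro i hi
        rcases List.mem_cons.mp hi with rfl | hi
        · exact hmnz
        · exact alt''.2.2 i hi
      · intro k₀ hk₀
        simp at hk₀
        subst hk₀
        exact ⟨m, rfl, hmk, hkm, hsgn⟩

lemma altOf_of_pow (n : ℕ) (h : ℝ[X]) (l : List ℕ)
    (H : AltOf ((X + 1) ^ n * h) l) :
    ∃ l', AltOf h l' ∧ l'.length = l.length := by
  induction n generalizing l with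
  | zero => exact ⟨l, by simpa using H, rfl⟩
  | succ n ih =>
    have : (X + 1) ^ (n + 1) * h = (X + 1) * ((X + 1) ^ n * h) := by ring
    rw [this] at H
    obtain ⟨l₁, Hl₁, len₁, _⟩ := altOf_of_X_add_one_mul ((X + 1) ^ n * h) l H
    obtain ⟨l₂, Hl₂, len₂⟩ := ih l₁ Hl₁
    exact ⟨l₂, Hl₂, len₂.trans len₁⟩

lemma neg_of_neg_neg {a b c : ℝ} (ab : a * b < 0) (bc : b * c < 0) : a * c > 0 := by
  nlinarith [mul_pos_of_neg_of_neg ab bc, mul_self_nonneg b]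

lemma alt_chain_glue (c : ℕ → ℝ) (u v : List ℕ) (p : ℕ)
    (H : ((u ++ p :: v).map c).Chain' (fun a b => a * b < 0)) :
    ((u ++ v.drop 1).map c).Chain' (fun a b => a * b < 0) := by
  rw [List.map_append] at H ⊢
  unfold List.Chain' at H ⊢
  rw [List.isChain_append] at H ⊢
  obtain ⟨H1, H2, H3⟩ := H
  refine ⟨H1, ?_, ?_⟩
  · have : (v.map c).Chain' (fun a b => a * b < 0) := by
      have := H2.tail
      simpa [List.Chain'] using this
    have := this.tail
    simpa [List.drop_one, List.map_tail] using this
  · intro x hx y hy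
    cases v with
    | nil => simp at hy
    | cons y₀ v' =>
      cases v' with
      | nil => simp at hy
      | cons y₁ v'' =>
        simp at hy
        subst hy
        have hxp : x * c p < 0 := by
          have := H3 x hx (c p) (by simp)
          exact this
        have h2 := H2
        simp [List.isChain_cons_cons] at h2
        have hpy₀ : c p * c y₀ < 0 := h2.1
        have hy₀y₁ : c y₀ * c y₁ < 0 := h2.2.1
        have := neg_of_neg_neg hxp hpy₀
        nlinarith [mul_self_nonneg (c p), mul_self_nonneg (c y₀)]

lemma altOf_add_single (h : ℝ[X]) (c : ℝ) (p : ℕ) (l : List ℕ)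
    (H : AltOf (h + C c * X ^ p) l) :
    ∃ l', AltOf h l' ∧ l.length ≤ l'.length + 2 := by
  obtain ⟨Hc, Ha, Hnz⟩ := H
  have coeff_ne : ∀ i : ℕ, i ≠ p → (h + C c * X ^ p).coeff i = h.coeff i := by
    intro i hip
    simp [coeff_add, coeff_C_mul, coeff_X_pow, hip, Ne.symm hip]
  by_cases hp : p ∈ l
  · obtain ⟨u, v, rfl⟩ := List.append_of_mem hp
    have hpw : (u ++ p :: v).Pairwise (· < ·) := List.isChain_iff_pairwise.mp Hc
    have hmemne : ∀ i ∈ u ++ v.drop 1, i ≠ p := by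
      intro i hi
      rw [List.pairwise_append] at hpw
      rcases List.mem_append.mp hi with hiu | hiv
      · exact Nat.ne_of_lt (hpw.2.2 i hiu p (List.mem_cons_self))
      · have : p < i := (List.pairwise_cons.mp hpw.2.1).1 i
          (List.mem_of_mem_drop hiv)
        omega
    have hmem : ∀ i ∈ u ++ v.drop 1, i ∈ u ++ p :: v := by
      intro i hi
      rcases List.mem_append.mp hi with hiu | hiv
      · exact List.mem_append.mpr (Or.inl hiu)
      · exact List.mem_append.mpr (Or.inr (List.mem_cons_of_mem _ (List.mem_of_mem_drop hiv)))
    have hmapeq : (u ++ v.drop 1).map (h + C c * X ^ p).coeff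
        = (u ++ v.drop 1).map h.coeff :=
      List.map_congr_left (fun i hi => coeff_ne i (hmemne i hi))
    have hsub : List.Sublist (u ++ v.drop 1) (u ++ p :: v) := by
      refine List.Sublist.append (List.Sublist.refl u) ?_
      exact (List.drop_sublist 1 v).trans (List.sublist_cons_self p v)
    refine ⟨u ++ v.drop 1, ⟨?_, ?_, ?_⟩, ?_⟩
    · exact List.isChain_iff_pairwise.mpr (hpw.sublist hsub)
    · rw [← hmapeq]
      exact alt_chain_glue (h + C c * X ^ p).coeff u v p Ha
    · intro i hi
      rw [← coeff_ne i (hmemne i hi)]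
      exact Hnz i (hmem i hi)
    · simp only [List.length_append, List.length_cons, List.length_drop]
      omega
  · refine ⟨l, ⟨Hc, ?_, ?_⟩, by omega⟩
    · have : l.map (h + C c * X ^ p).coeff = l.map h.coeff :=
        List.map_congr_left (fun i hi => coeff_ne i (fun e => hp (e ▸ hi)))
      rwa [this] at Ha
    · intro i hi
      rw [← coeff_ne i (fun e => hp (e ▸ hi))]
      exact Hnz i hi

lemma term_coeff (c : ℝ) (a b k : ℕ) :
    (C c * X ^ a * (X + 1) ^ b).coeff k
      = c * (if a ≤ k then ((b.choose (k - a) : ℝ)) else 0) := by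
  have : C c * X ^ a * (X + 1) ^ b = C c * ((X + 1) ^ b * X ^ a) := by ring
  rw [this, coeff_C_mul, coeff_mul_X_pow']
  split_ifs with hak
  · rw [coeff_X_add_one_pow]
  · rfl

lemma altOf_single_term (c : ℝ) (a b : ℕ) (l : List ℕ)
    (H : AltOf (C c * X ^ a * (X + 1) ^ b) l) : l.length ≤ 1 := by
  match l with
  | [] => simp
  | [x] => simp
  | x :: y :: rest =>
    exfalso
    have hxy : (C c * X ^ a * (X + 1) ^ b).coeff x * (C c * X ^ a * (X + 1) ^ b).coeff y < 0 := by
      have := H.2.1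
      unfold List.Chain' at this
      rw [List.map_cons, List.map_cons, List.isChain_cons_cons] at this
      exact this.1
    rw [term_coeff, term_coeff] at hxy
    have hA : (0:ℝ) ≤ (if a ≤ x then ((b.choose (x - a) : ℝ)) else 0) := by
      split_ifs <;> positivity
    have hB : (0:ℝ) ≤ (if a ≤ y then ((b.choose (y - a) : ℝ)) else 0) := by
      split_ifs <;> positivity
    nlinarith [mul_self_nonneg c, mul_nonneg hA hB]

lemma main_bound : ∀ (n : ℕ) (T : Finset (ℕ × ℕ)) (c : ℕ × ℕ → ℝ) (l : List ℕ),
    T.card = n → T.Nonempty →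
    AltOf (∑ p ∈ T, C (c p) * X ^ p.1 * (X + 1) ^ p.2) l → l.length ≤ 2 * n - 1 := by
  intro n
  induction n using Nat.strong_induction_on with
  | _ n IH =>
    intro T c l hcard hne H
    match n, hcard with
    | 0, hcard =>
      exfalso
      rw [Finset.card_eq_zero] at hcard
      exact Finset.not_nonempty_empty (hcard ▸ hne)
    | 1, hcard =>
      obtain ⟨p, rfl⟩ := Finset.card_eq_one.mp hcard
      rw [Finset.sum_singleton] at H
      simpa using altOf_single_term _ _ _ _ H
    | (n + 2), hcard =>
      -- minimum of second coordinates
      have hne' : (T.image Prod.snd).Nonempty := hne.image _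
      set m := (T.image Prod.snd).min' hne' with hm_def
      have hm : ∀ p ∈ T, m ≤ p.2 := fun p hp =>
        Finset.min'_le _ _ (Finset.mem_image_of_mem _ hp)
      obtain ⟨p₀, hp₀T, hp₀⟩ : ∃ p ∈ T, p.2 = m := by
        have := (T.image Prod.snd).min'_mem hne'
        rw [← hm_def] at this
        obtain ⟨p, hp, hpe⟩ := Finset.mem_image.mp this
        exact ⟨p, hp, hpe⟩
      set π : ℕ × ℕ → ℕ × ℕ := fun p => (p.1, p.2 - m) with hπ
      set T' := T.image π with hT'
      set c' : ℕ × ℕ → ℝ := fun q => c (q.1, q.2 + m) with hc'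
      have hinj : ∀ p ∈ T, ∀ q ∈ T, π p = π q → p = q := by
        intro p hp q hq hpq
        simp only [hπ, Prod.ext_iff] at hpq
        have := hm p hp
        have := hm q hq
        exact Prod.ext hpq.1 (by omega)
      have hcard' : T'.card = n + 2 := by
        rw [hT', Finset.card_image_of_injOn hinj, hcard]
      have hCeq : ∀ p ∈ T, c' (π p) = c p := by
        intro p hp
        have : p.2 - m + m = p.2 := Nat.sub_add_cancel (hm p hp)
        simp [hc', hπ, this]
      have hsum : (∑ p ∈ T, C (c p) * X ^ p.1 * (X + 1) ^ p.2)
          = (X + 1) ^ m * ∑ q ∈ T', C (c' q) * X ^ q.1 * (X + 1) ^ q.2 := by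
        rw [hT', Finset.sum_image hinj, Finset.mul_sum]
        apply Finset.sum_congr rfl
        intro p hp
        rw [hCeq p hp]
        have hmp := hm p hp
        have hb : p.2 = m + (p.2 - m) := by omega
        calc C (c p) * X ^ p.1 * (X + 1) ^ p.2
            = C (c p) * X ^ p.1 * (X + 1) ^ (m + (p.2 - m)) := by rw [← hb]
          _ = (X + 1) ^ m * (C (c p) * X ^ (π p).1 * (X + 1) ^ (π p).2) := by
              rw [pow_add]; ring
      rw [hsum] at H
      obtain ⟨l₁, H₁, hlen₁⟩ := altOf_of_pow m _ l H
      -- the spike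
      set q₀ : ℕ × ℕ := π p₀ with hq₀
      have hq₀T' : q₀ ∈ T' := Finset.mem_image_of_mem _ hp₀T
      have hq₀snd : q₀.2 = 0 := by
        have : q₀.2 = p₀.2 - m := by simp [hq₀, hπ]
        omega
      have hdecomp : (∑ q ∈ T', C (c' q) * X ^ q.1 * (X + 1) ^ q.2)
          = (∑ q ∈ T'.erase q₀, C (c' q) * X ^ q.1 * (X + 1) ^ q.2)
            + C (c' q₀) * X ^ q₀.1 := by
        conv_lhs => rw [← Finset.sum_erase_add T' _ hq₀T']
        rw [hq₀snd, pow_zero, mul_one]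
      rw [hdecomp] at H₁
      obtain ⟨l₂, H₂, hlen₂⟩ := altOf_add_single _ (c' q₀) q₀.1 l₁ H₁
      have herase_card : (T'.erase q₀).card = n + 1 := by
        rw [Finset.card_erase_of_mem hq₀T', hcard']
        omega
      have herase_ne : (T'.erase q₀).Nonempty := by
        rw [← Finset.card_pos, herase_card]; omega
      have := IH (n + 1) (by omega) (T'.erase q₀) c' l₂ herase_card herase_ne H₂
      omega

lemma neg_of_pos_neg {a b c : ℝ} (ab : a * b > 0) (bc : b * c < 0) : a * c < 0 := by
  nlinarith [mul_neg_of_pos_of_neg ab bc, mul_self_nonneg b]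

lemma extract (cf : ℕ → ℝ) : ∀ (L : List ℕ), L.Chain' (· < ·) → (∀ i ∈ L, cf i ≠ 0) →
    L ≠ [] →
    ∃ l : List ℕ, l.Chain' (· < ·) ∧ (l.map cf).Chain' (fun a b => a * b < 0) ∧
      (∀ i ∈ l, i ∈ L) ∧
      l.length = 1 + ((L.map cf).zip (L.map cf).tail).countP (fun p => decide (p.1 * p.2 < 0)) ∧
      l.head? = L.head? := by
  intro L
  induction L with
  | nil => intro _ _ h; exact absurd rfl h
  | cons x rest ih =>
    intro hc hnz _
    cases rest with
    | nil =>
      exact ⟨[x], by simp [List.Chain'], by simp [List.Chain'], by simp, by simp, rfl⟩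
    | cons y rest' =>
      obtain ⟨l', hc', ha', hmem', hlen', hhead'⟩ :=
        ih hc.tail (fun i hi => hnz i (List.mem_cons_of_mem _ hi)) (by simp)
      obtain ⟨t, rfl⟩ : ∃ t, l' = y :: t := by
        cases l' with
        | nil => simp at hhead'
        | cons z t => simp at hhead'; exact ⟨t, by rw [hhead']⟩
      have hxy : x < y := (List.isChain_cons_cons.mp hc).1
      have hxnz : cf x ≠ 0 := hnz x (List.mem_cons_self)
      have hynz : cf y ≠ 0 := hnz y (List.mem_cons_of_mem _ (List.mem_cons_self))
      have hcount : ((List.map cf (x :: y :: rest')).zip (List.map cf (x :: y :: rest')).tail).countP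
            (fun p => decide (p.1 * p.2 < 0))
          = (((List.map cf (y :: rest')).zip (List.map cf (y :: rest')).tail).countP
            (fun p => decide (p.1 * p.2 < 0)))
            + (if cf x * cf y < 0 then 1 else 0) := by
        simp only [List.map_cons, List.tail_cons, List.zip_cons_cons, List.countP_cons,
          decide_eq_true_eq]
      by_cases hs : cf x * cf y < 0
      · refine ⟨x :: y :: t, ?_, ?_, ?_, ?_, rfl⟩
        · exact List.isChain_cons_cons.mpr ⟨hxy, hc'⟩
        · unfold List.Chain'
          rw [List.map_cons, List.map_cons, List.isChain_cons_cons]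
          exact ⟨hs, by simpa [List.Chain'] using ha'⟩
        · intro i hi
          rcases List.mem_cons.mp hi with rfl | hi
          · exact List.mem_cons_self
          · exact List.mem_cons_of_mem _ (hmem' i hi)
        · simp only [List.length_cons]
          rw [hcount, if_pos hs]
          simp only [List.length_cons] at hlen'
          omega
      · have hpos : cf x * cf y > 0 := by
          rcases lt_trichotomy (cf x * cf y) 0 with h | h | h
          · exact absurd h hs
          · exact absurd (mul_eq_zero.mp h) (by push_neg; exact ⟨hxnz, hynz⟩)
          · exact h
        refine ⟨x :: t, ?_, ?_, ?_, ?_, rfl⟩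
        · unfold List.Chain'
          rw [List.isChain_cons]
          refine ⟨fun b hb => ?_, hc'.tail⟩
          have := (List.isChain_cons.mp hc').1 b hb
          omega
        · unfold List.Chain'
          rw [List.map_cons, List.isChain_cons]
          constructor
          · intro b hb
            have hyt : ∀ b ∈ (t.map cf).head?, cf y * b < 0 := by
              have := (List.isChain_cons.mp (by rw [List.map_cons] at ha'; exact ha')).1
              simpa using this
            exact neg_of_pos_neg hpos (hyt b hb)
          · have := ha'.tail
            simpa using this
        · intro i hi
          rcases List.mem_cons.mp hi with rfl | hi
          · exact List.mem_cons_self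
          · exact List.mem_cons_of_mem _ (hmem' i (List.mem_cons_of_mem _ hi))
        · simp only [List.length_cons]
          rw [hcount, if_neg hs]
          simp only [List.length_cons] at hlen'
          omega

lemma aeval_expand (f : MvPolynomial (Fin 2) ℝ) :
    MvPolynomial.aeval ![X, X + 1] f
      = ∑ d ∈ f.support, C (MvPolynomial.coeff d f) * X ^ (d 0) * (X + 1) ^ (d 1) := by
  conv_lhs => rw [f.as_sum]
  rw [map_sum]
  apply Finset.sum_congr rfl
  intro d _
  rw [MvPolynomial.aeval_monomial]
  rw [Finsupp.prod_fintype _ _ (fun i => pow_zero _), Fin.prod_univ_two]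
  simp [algebraMap_eq]
  ring

lemma pair_reconstruct (d : Fin 2 →₀ ℕ) :
    (Finsupp.single (0 : Fin 2) (d 0) + Finsupp.single 1 (d 1)) = d := by
  ext i
  fin_cases i <;> simp [Finsupp.single_apply]

theorem V_subst_X_add_one_le (f : MvPolynomial (Fin 2) ℝ) (t : ℕ)
    (ht : f.support.card ≤ t) :
    V (MvPolynomial.aeval ![X, X + 1] f) ≤ 2 * t - 2 := by
  set g : ℝ[X] := MvPolynomial.aeval ![X, X + 1] f with hgdef
  by_cases hg0 : g = 0
  · rw [V, if_pos hg0]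
    omega
  · rw [V, if_neg hg0]
    have hf0 : f ≠ 0 := by
      rintro rfl
      exact hg0 (by rw [hgdef]; exact map_zero _)
    have hsupp : f.support.Nonempty := MvPolynomial.support_nonempty.mpr hf0
    set e : ℕ × ℕ → (Fin 2 →₀ ℕ) :=
      fun q => Finsupp.single 0 q.1 + Finsupp.single 1 q.2 with he
    set T : Finset (ℕ × ℕ) := f.support.image (fun d => (d 0, d 1)) with hT
    set c : ℕ × ℕ → ℝ := fun q => MvPolynomial.coeff (e q) f with hc
    have hrec : ∀ d : Fin 2 →₀ ℕ, e (d 0, d 1) = d := fun d => pair_reconstruct d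
    have hinj : ∀ d ∈ f.support, ∀ d' ∈ f.support,
        (d 0, d 1) = (d' 0, d' 1) → d = d' := by
      intro d _ d' _ hdd
      rw [← hrec d, ← hrec d', hdd]
    have hTne : T.Nonempty := hsupp.image _
    have hTcard : T.card ≤ t := le_trans Finset.card_image_le ht
    have hgsum : g = ∑ q ∈ T, C (c q) * X ^ q.1 * (X + 1) ^ q.2 := by
      rw [hgdef, aeval_expand, hT, Finset.sum_image hinj]
      apply Finset.sum_congr rfl
      intro d hd
      rw [hc]
      simp only [hrec d]
    set L := g.support.sort (· ≤ ·) with hL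
    have hLc : L.Chain' (· < ·) := List.isChain_iff_pairwise.mpr g.support.sortedLT_sort.pairwise
    have hLnz : ∀ i ∈ L, g.coeff i ≠ 0 := by
      intro i hi
      exact mem_support_iff.mp ((Finset.mem_sort _).mp hi)
    have hLne : L ≠ [] := by
      intro h
      refine hg0 (support_eq_empty.mp (Finset.eq_empty_of_forall_notMem fun x hx => ?_))
      have hx' := (Finset.mem_sort (α := ℕ) (· ≤ ·)).mpr hx
      rw [← hL, h] at hx'
      simp at hx'
    obtain ⟨l, hc1, hc2, hmem, hlen, _⟩ := extract g.coeff L hLc hLnz hLne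
    have hAlt : AltOf (∑ q ∈ T, C (c q) * X ^ q.1 * (X + 1) ^ q.2) l := by
      rw [← hgsum]
      exact ⟨hc1, hc2, fun i hi => hLnz i (hmem i hi)⟩
    have hbound := main_bound T.card T c l rfl hTne hAlt
    have hsc : signChanges g
        = ((L.map g.coeff).zip (L.map g.coeff).tail).countP
            (fun p => decide (p.1 * p.2 < 0)) := by
      simp only [signChanges, hL]
    have hT1 : 1 ≤ T.card := Finset.card_pos.mpr hTne
    omega
end

section
/- Let f ∈ ℝ[x,y] be a polynomial with at most t nonzero terms and let a, b ∈ ℝ. Set g(x) = f(x, a·x + b). Then either g is identically zero, or g has at most 6t-4 real roots, counted with multiplicities except that the possible roots 0 and -b/a are each counted at most once. -/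
open Polynomial

namespace AvendanoAux

/-- helper sign lemmas -/
private lemma sign_aux1 {a b c : ℝ} (h1 : a * b < 0) (h2 : b * c < 0) : 0 < a * c := by
  nlinarith [sq_nonneg b, sq_nonneg (a*c), mul_self_nonneg b]

private lemma sign_aux2 {a c d : ℝ} (h1 : 0 < a * c) (h2 : c * d < 0) : a * d < 0 := by
  nlinarith [sq_nonneg c]

private lemma sign_aux3 {a b c d : ℝ} (h1 : a * b < 0) (h2 : b * c < 0) (h3 : c * d < 0) :
    a * d < 0 := sign_aux2 (sign_aux1 h1 h2) h3

/-- A chain of `k` sign changes in the coefficients of `P`. -/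
def Chain (P : ℝ[X]) (k : ℕ) : Prop :=
  ∃ n : ℕ → ℕ, (∀ i < k, n i < n (i + 1)) ∧ (∀ i < k, P.coeff (n i) * P.coeff (n (i + 1)) < 0)

private lemma chain_zero (P : ℝ[X]) : Chain P 0 :=
  ⟨fun _ => 0, fun i hi => absurd hi (Nat.not_lt_zero i), fun i hi => absurd hi (Nat.not_lt_zero i)⟩

private lemma chain_le {P : ℝ[X]} {k : ℕ} (h : Chain P k) : k ≤ P.natDegree := by
  obtain ⟨n, hm, hs⟩ := h
  rcases Nat.eq_zero_or_pos k with hk | hk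
  · omega
  have hidx : ∀ i ≤ k, i ≤ n i := by
    intro i hi
    induction i with
    | zero => exact Nat.zero_le _
    | succ j ih =>
      have h1 : j ≤ n j := ih (by omega)
      have h2 : n j < n (j + 1) := hm j (by omega)
      omega
  have hco : P.coeff (n k) ≠ 0 := by
    have := hs (k - 1) (by omega)
    have hk' : k - 1 + 1 = k := by omega
    rw [hk'] at this
    exact right_ne_zero_of_mul (ne_of_lt this)
  have := Polynomial.le_natDegree_of_ne_zero hco
  have := hidx k le_rfl
  omega

open scoped Classical in
/-- The sign variation: the largest number of sign changes in a chain. -/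
noncomputable def V (P : ℝ[X]) : ℕ := Nat.findGreatest (Chain P) P.natDegree

private lemma le_V {P : ℝ[X]} {k : ℕ} (h : Chain P k) : k ≤ V P := by
  classical
  exact Nat.le_findGreatest (chain_le h) h

private lemma chain_V (P : ℝ[X]) : Chain P (V P) := by
  classical
  exact Nat.findGreatest_spec (Nat.zero_le _) (chain_zero P)

private lemma V_le {P : ℝ[X]} {M : ℕ} (h : ∀ k, Chain P k → k ≤ M) : V P ≤ M :=
  h _ (chain_V P)

/-- If all products of coefficients are nonnegative, the variation vanishes. -/
private lemma V_eq_zero_of_nonneg {P : ℝ[X]} (h : ∀ m l : ℕ, 0 ≤ P.coeff m * P.coeff l) :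
    V P = 0 := by
  refine Nat.le_zero.mp (V_le ?_)
  rintro k ⟨n, hm, hs⟩
  by_contra hk
  exact absurd (hs 0 (by omega)) (not_lt.mpr (h _ _))

/-- Changing one coefficient raises the variation by at most 2. -/
private lemma V_modify {P R : ℝ[X]} (j : ℕ) (h : ∀ m : ℕ, m ≠ j → P.coeff m = R.coeff m) :
    V P ≤ V R + 2 := by
  obtain ⟨n, hm, hs⟩ := chain_V P
  set k := V P with hkdef
  rcases Nat.lt_or_ge k 3 with hk | hk
  · omega
  -- strict monotonicity on the used range
  have hmono : ∀ i j', i ≤ k → j' ≤ k → i < j' → n i < n j' := by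
    intro i j' hi hj hij
    have : ∀ d, i + d ≤ k → n i < n (i + d) ∨ d = 0 := by
      intro d
      induction d with
      | zero => intro _; right; rfl
      | succ e ih =>
        intro hle
        left
        have h3 : i + (e + 1) = i + e + 1 := by omega
        rw [h3]
        have h2 : n (i + e) < n (i + e + 1) := hm _ (by omega)
        rcases ih (by omega) with h1 | h1
        · omega
        · rw [h1] at h2; simpa [h1] using h2
    rcases this (j' - i) (by omega) with h1 | h1
    · have : i + (j' - i) = j' := by omega
      rwa [this] at h1
    · omega
  by_cases hex : ∃ i ≤ k, n i = j
  · obtain ⟨i₀, hi₀k, hi₀⟩ := hex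
    set d := min i₀ (k - 1) with hd
    -- new chain dropping positions d, d+1
    refine le_trans ?_ (Nat.add_le_add_right (le_V (k := k - 2) ⟨fun i => if i < d then n i else n (i + 2), ?_, ?_⟩) 2)
    · omega
    · intro i hi
      by_cases h1 : i < d
      · by_cases h2 : i + 1 < d
        · simpa [h1, h2] using hm i (by omega)
        · have : i + 1 = d := by omega
          simp only [h1, if_pos, if_neg (by omega : ¬ i + 1 < d)]
          exact hmono i (i + 1 + 2) (by omega) (by omega) (by omega)
      · simp only [if_neg h1, if_neg (by omega : ¬ i + 1 < d)]
        exact hm (i + 2) (by omega)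
    · -- signs
      have hne : ∀ p ≤ k, p ≠ d → p ≠ d + 1 → n p ≠ j := by
        intro p hp hp1 hp2 hnp
        have : p = i₀ := by
          by_contra hpi
          rcases Nat.lt_or_ge p i₀ with hlt | hgt
          · exact absurd (hnp ▸ hmono p i₀ hp hi₀k hlt) (by rw [hi₀]; omega)
          · have : i₀ < p := by omega
            exact absurd (hi₀ ▸ hmono i₀ p hi₀k hp this) (by rw [hnp]; omega)
        omega
      intro i hi
      by_cases h1 : i < d
      · by_cases h2 : i + 1 < d
        · have e1 := h _ (hne i (by omega) (by omega) (by omega))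
          have e2 := h _ (hne (i+1) (by omega) (by omega) (by omega))
          simp only [h1, h2, if_pos]
          rw [← e1, ← e2]
          exact hs i (by omega)
        · -- seam : i + 1 = d
          have hseam : i + 1 = d := by omega
          simp only [if_pos h1, if_neg (by omega : ¬ i + 1 < d)]
          have hd2 : d + 2 ≤ k := by omega
          have e1 := h _ (hne i (by omega) (by omega) (by omega))
          have e2 := h _ (hne (i + 1 + 2) (by omega) (by omega) (by omega))
          rw [← e1, ← e2]
          have s1 : P.coeff (n i) * P.coeff (n (i+1)) < 0 := hs i (by omega)
          have s2 : P.coeff (n (i+1)) * P.coeff (n (i+2)) < 0 := hs (i+1) (by omega)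
          have s3 : P.coeff (n (i+2)) * P.coeff (n (i+3)) < 0 := hs (i+2) (by omega)
          have := sign_aux3 s1 s2 s3
          have h13 : i + 1 + 2 = i + 3 := by omega
          rwa [h13]
      · simp only [if_neg h1, if_neg (by omega : ¬ i + 1 < d)]
        have e1 := h _ (hne (i+2) (by omega) (by omega) (by omega))
        have e2 := h _ (hne (i+3) (by omega) (by omega) (by omega))
        have h13 : i + 1 + 2 = i + 3 := by omega
        rw [h13, ← e1, ← e2]
        exact hs (i + 2) (by omega)
  · push_neg at hex
    have : k ≤ V R := by
      refine le_V ⟨n, hm, ?_⟩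
      intro i hi
      rw [← h _ (hex i (by omega)), ← h _ (hex (i+1) (by omega))]
      exact hs i (by omega)
    omega

end AvendanoAux

namespace AvendanoAux

/-- coefficient of (1+X)*Q -/
private lemma coeff_one_add_X_mul (Q : ℝ[X]) (m : ℕ) :
    ((1 + X) * Q).coeff m = Q.coeff m + (X * Q).coeff m := by
  rw [add_mul, one_mul, Polynomial.coeff_add]

private lemma coeff_X_mul_eq (Q : ℝ[X]) (m : ℕ) :
    (X * Q).coeff m = if m = 0 then 0 else Q.coeff (m - 1) := by
  cases m with
  | zero => simp [Polynomial.mul_coeff_zero]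
  | succ l => simp [Polynomial.coeff_X_mul]

private lemma sign_aux4 {a b p q : ℝ} (h1 : 0 < a * p) (h2 : 0 < b * q) (h3 : p * q < 0) :
    a * b < 0 := by nlinarith [sq_nonneg p, sq_nonneg q, sq_nonneg (p*q)]

/-- Multiplying by (1+X) does not increase the variation. -/
private lemma V_one_add_X_mul (Q : ℝ[X]) : V ((1 + X) * Q) ≤ V Q := by
  set P := (1 + X) * Q with hP
  obtain ⟨n, hm, hs⟩ := chain_V P
  set k := V P with hk
  rcases Nat.eq_zero_or_pos k with hk0 | hk0
  · omega
  -- every index in the chain has a nonzero P coefficient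
  have hPc : ∀ i ≤ k, P.coeff (n i) ≠ 0 := by
    intro i hi
    rcases Nat.lt_or_ge i k with h | h
    · exact left_ne_zero_of_mul (ne_of_lt (hs i h))
    · have : i = k := by omega
      subst this
      have := hs (k-1) (by omega)
      rw [show k - 1 + 1 = k by omega] at this
      exact right_ne_zero_of_mul (ne_of_lt this)
  -- witness choice
  have hw : ∀ i ≤ k, ∃ w, (w = n i ∨ (w + 1 = n i)) ∧ 0 < Q.coeff w * P.coeff (n i) := by
    intro i hi
    by_cases hq : 0 < Q.coeff (n i) * P.coeff (n i)
    · exact ⟨n i, Or.inl rfl, hq⟩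
    · have hPne := hPc i hi
      have hXQ : 0 < (X * Q).coeff (n i) * P.coeff (n i) := by
        have hcoeff := coeff_one_add_X_mul Q (n i)
        rw [← hP] at hcoeff
        have hx : (X * Q).coeff (n i) = P.coeff (n i) - Q.coeff (n i) := by linarith
        rw [hx]
        have h3 := mul_self_pos.mpr hPne
        push_neg at hq
        nlinarith
      have hne : (X * Q).coeff (n i) ≠ 0 := left_ne_zero_of_mul (ne_of_gt hXQ)
      have hni : n i ≠ 0 := by
        intro h0
        rw [coeff_X_mul_eq, if_pos h0] at hne
        exact hne rfl
      refine ⟨n i - 1, Or.inr (by omega), ?_⟩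
      rwa [coeff_X_mul_eq, if_neg hni] at hXQ
  choose w hw1 hw2 using hw
  refine le_V ⟨fun i => if h : i ≤ k then w i h else 0, ?_, ?_⟩
  · intro i hi
    have hii : i ≤ k := by omega
    have hii1 : i + 1 ≤ k := by omega
    simp only [dif_pos hii, dif_pos hii1]
    have ha := hw1 i hii
    have hb := hw1 (i+1) hii1
    have hmn := hm i hi
    -- w i ≤ n i,  n (i+1) - 1 ≤ w (i+1)
    have hlt : w i hii ≤ w (i+1) hii1 := by omega
    rcases Nat.lt_or_ge (w i hii) (w (i+1) hii1) with h | h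
    · exact h
    · exfalso
      have heq : w i hii = w (i+1) hii1 := by omega
      have h1 := hw2 i hii
      have h2 := hw2 (i+1) hii1
      rw [heq] at h1
      have := hs i hi
      nlinarith [sq_nonneg (Q.coeff (w (i+1) hii1))]
  · intro i hi
    have hii : i ≤ k := by omega
    have hii1 : i + 1 ≤ k := by omega
    simp only [dif_pos hii, dif_pos hii1]
    exact sign_aux4 (hw2 i hii) (hw2 (i+1) hii1) (hs i hi)

private lemma V_one_add_X_pow_mul (Q : ℝ[X]) (m : ℕ) : V ((1 + X) ^ m * Q) ≤ V Q := by
  induction m with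
  | zero => simp
  | succ l ih =>
    calc V ((1 + X) ^ (l + 1) * Q) = V ((1 + X) * ((1 + X) ^ l * Q)) := by ring_nf
    _ ≤ V ((1 + X) ^ l * Q) := V_one_add_X_mul _
    _ ≤ V Q := ih

/-- The monomials c·X^a·(1+X)^b have no sign changes. -/
private lemma V_monomial (c : ℝ) (a b : ℕ) : V (C c * (X ^ a * (1 + X) ^ b)) = 0 := by
  refine V_eq_zero_of_nonneg ?_
  have hco : ∀ m : ℕ, (C c * (X ^ a * (1 + X) ^ b)).coeff m
      = c * (if a ≤ m then ((b.choose (m - a) : ℝ)) else 0) := by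
    intro m
    rw [Polynomial.coeff_C_mul, mul_comm (X ^ a) ((1+X)^b), Polynomial.coeff_mul_X_pow']
    congr 1
    split
    · rw [show (1 + X : ℝ[X]) = X + 1 by ring, Polynomial.coeff_X_add_one_pow]
    · rfl
  intro m l
  rw [hco, hco]
  have h1 : (0:ℝ) ≤ (b.choose (m - a) : ℝ) := Nat.cast_nonneg _
  have h2 : (0:ℝ) ≤ (b.choose (l - a) : ℝ) := Nat.cast_nonneg _
  split <;> split <;> nlinarith [sq_nonneg c, mul_nonneg h1 h2]

/-- chains lift through multiplication by X (one direction). -/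
private lemma V_le_V_X_mul (Q : ℝ[X]) : V Q ≤ V (X * Q) := by
  obtain ⟨n, hm, hs⟩ := chain_V Q
  refine le_V ⟨fun i => n i + 1, fun i hi => Nat.add_lt_add_right (hm i hi) 1, ?_⟩
  intro i hi
  beta_reduce
  rw [Polynomial.coeff_X_mul, Polynomial.coeff_X_mul]
  exact hs i hi

/-- variation of the derivative is at most that of P -/
private lemma V_derivative_le (P : ℝ[X]) : V (derivative P) ≤ V P := by
  obtain ⟨n, hm, hs⟩ := chain_V (derivative P)
  refine le_V ⟨fun i => n i + 1, fun i hi => Nat.add_lt_add_right (hm i hi) 1, ?_⟩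
  intro i hi
  beta_reduce
  have h1 := hs i hi
  rw [Polynomial.coeff_derivative, Polynomial.coeff_derivative] at h1
  have c1 : (0:ℝ) < (n i : ℝ) + 1 := by positivity
  have c2 : (0:ℝ) < (n (i+1) : ℝ) + 1 := by positivity
  nlinarith [mul_pos c1 c2]

/-- Prepending: if the constant coefficient has opposite sign to the first
nonzero positive-index coefficient, the variation strictly exceeds that of the derivative. -/
private lemma V_prepend {P : ℝ[X]} {j : ℕ} (hj : 1 ≤ j)
    (hmin : ∀ i, 1 ≤ i → i < j → P.coeff i = 0)
    (hsign : P.coeff 0 * P.coeff j < 0) :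
    V (derivative P) + 1 ≤ V P := by
  obtain ⟨n, hm, hs⟩ := chain_V (derivative P)
  set k := V (derivative P) with hk
  -- shifted chain for P
  have hsP : ∀ i < k, P.coeff (n i + 1) * P.coeff (n (i+1) + 1) < 0 := by
    intro i hi
    have h1 := hs i hi
    rw [Polynomial.coeff_derivative, Polynomial.coeff_derivative] at h1
    have c1 : (0:ℝ) < (n i : ℝ) + 1 := by positivity
    have c2 : (0:ℝ) < (n (i+1) : ℝ) + 1 := by positivity
    nlinarith [mul_pos c1 c2]
  have hc0 : P.coeff 0 ≠ 0 := left_ne_zero_of_mul (ne_of_lt hsign)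
  have hcj : P.coeff j ≠ 0 := right_ne_zero_of_mul (ne_of_lt hsign)
  rcases Nat.eq_zero_or_pos k with hk0 | hk0
  · -- just need a chain of length 1 : indices 0 and j
    rw [hk0]
    refine le_V ⟨fun i => if i = 0 then 0 else j, ?_, ?_⟩
    · intro i hi
      have h0 : i = 0 := by omega
      subst h0
      simpa using (show 0 < j from hj)
    · intro i hi
      have h0 : i = 0 := by omega
      subst h0
      simpa using hsign
  · -- front coefficient of shifted chain
    have hfront : P.coeff (n 0 + 1) ≠ 0 := by
      have := hsP 0 hk0
      exact left_ne_zero_of_mul (ne_of_lt this)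
    by_cases hcase : P.coeff 0 * P.coeff (n 0 + 1) < 0
    · refine le_V ⟨fun i => if i = 0 then 0 else n (i - 1) + 1, ?_, ?_⟩
      · intro i hi
        rcases Nat.eq_zero_or_pos i with h0 | h0
        · simp [h0]
        · have h1 : ¬ (i = 0) := by omega
          have h2 : ¬ (i + 1 = 0) := by omega
          simp only [if_neg h1, if_neg h2]
          have := hm (i-1) (by omega)
          rw [show i + 1 - 1 = i - 1 + 1 by omega]
          omega
      · intro i hi
        rcases Nat.eq_zero_or_pos i with h0 | h0
        · subst h0
          simpa using hcase
        · have h1 : ¬ (i = 0) := by omega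
          have h2 : ¬ (i + 1 = 0) := by omega
          simp only [if_neg h1, if_neg h2]
          rw [show i + 1 - 1 = i - 1 + 1 by omega]
          exact hsP (i-1) (by omega)
    · -- then P.coeff j and P.coeff (n 0 + 1) have opposite signs, and j < n 0 + 1
      have hprod : 0 < P.coeff 0 * P.coeff (n 0 + 1) := by
        rcases lt_trichotomy (P.coeff 0 * P.coeff (n 0 + 1)) 0 with h | h | h
        · exact absurd h hcase
        · exact absurd (by
            rcases mul_eq_zero.mp h with h | h
            · exact absurd h hc0
            · exact absurd h hfront) (fun h => h)
        · exact h
      have hjsign : P.coeff j * P.coeff (n 0 + 1) < 0 := by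
        nlinarith [sq_nonneg (P.coeff 0)]
      have hjlt : j < n 0 + 1 := by
        rcases Nat.lt_or_ge j (n 0 + 1) with h | h
        · exact h
        · rcases Nat.eq_or_lt_of_le h with h1 | h1
          · exfalso; rw [← h1] at hjsign; nlinarith
          · exfalso
            exact hfront (hmin _ (by omega) (by omega))
      refine le_V ⟨fun i => if i = 0 then j else n (i - 1) + 1, ?_, ?_⟩
      · intro i hi
        rcases Nat.eq_zero_or_pos i with h0 | h0
        · simp [h0, hjlt]
        · have h1 : ¬ (i = 0) := by omega
          have h2 : ¬ (i + 1 = 0) := by omega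
          simp only [if_neg h1, if_neg h2]
          have := hm (i-1) (by omega)
          rw [show i + 1 - 1 = i - 1 + 1 by omega]
          omega
      · intro i hi
        rcases Nat.eq_zero_or_pos i with h0 | h0
        · subst h0
          simpa using hjsign
        · have h1 : ¬ (i = 0) := by omega
          have h2 : ¬ (i + 1 = 0) := by omega
          simp only [if_neg h1, if_neg h2]
          rw [show i + 1 - 1 = i - 1 + 1 by omega]
          exact hsP (i-1) (by omega)

end AvendanoAux

namespace AvendanoAux

open Set Filter

/-- number of positive roots with multiplicity -/
noncomputable def Zp (P : ℝ[X]) : ℕ := Multiset.card (P.roots.filter (fun x => 0 < x))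

private lemma card_filter_roots (P : ℝ[X]) (pred : ℝ → Prop) [DecidablePred pred] :
    Multiset.card (P.roots.filter pred)
      = ∑ x ∈ P.roots.toFinset.filter pred, P.rootMultiplicity x := by
  rw [← Multiset.toFinset_sum_count_eq (P.roots.filter pred), Multiset.toFinset_filter]
  refine Finset.sum_congr rfl ?_
  intro x hx
  rw [Multiset.count_filter, if_pos (Finset.mem_filter.mp hx).2, Polynomial.count_roots]

private lemma sum_count_le (U : Finset ℝ) (M : Multiset ℝ) :
    ∑ x ∈ U, M.count x ≤ Multiset.card M := by
  calc ∑ x ∈ U, M.count x = ∑ x ∈ U.filter (· ∈ M.toFinset), M.count x := by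
        rw [Finset.sum_filter_of_ne]
        intro x _ hc
        rw [Multiset.mem_toFinset]
        exact Multiset.count_pos.mp (Nat.pos_of_ne_zero hc)
    _ ≤ ∑ x ∈ M.toFinset, M.count x := by
        refine Finset.sum_le_sum_of_subset ?_
        intro x hx
        exact (Finset.mem_filter.mp hx).2
    _ = Multiset.card M := Multiset.toFinset_sum_count_eq M

private lemma Zp_count_step {P : ℝ[X]} (hP : P ≠ 0) {e : ℕ}
    (h : (P.roots.toFinset.filter (fun x => 0 < x)).card ≤
      ((((derivative P).roots.toFinset.filter (fun x => 0 < x))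
          \ (P.roots.toFinset.filter (fun x => 0 < x))).card) + e) :
    Zp P ≤ Zp (derivative P) + e := by
  set S := P.roots.toFinset.filter (fun x => 0 < x) with hS
  set T := (derivative P).roots.toFinset.filter (fun x => 0 < x) with hT
  have h1 : Zp P = ∑ x ∈ S, P.rootMultiplicity x := by
    rw [Zp, card_filter_roots]
  have h2 : ∀ x ∈ S, P.rootMultiplicity x = (P.rootMultiplicity x - 1) + 1 := by
    intro x hx
    have hx1 : x ∈ P.roots.toFinset := (Finset.mem_filter.mp hx).1
    rw [Multiset.mem_toFinset] at hx1
    have : 0 < P.rootMultiplicity x := by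
      rw [← Polynomial.count_roots]
      exact Multiset.count_pos.mpr hx1
    omega
  have h3 : Zp P = (∑ x ∈ S, (P.rootMultiplicity x - 1)) + S.card := by
    rw [h1, Finset.sum_congr rfl h2, Finset.sum_add_distrib]
    simp
  have h4 : (∑ x ∈ S, (P.rootMultiplicity x - 1))
      ≤ ∑ x ∈ S, (derivative P).rootMultiplicity x :=
    Finset.sum_le_sum fun x _ =>
      Polynomial.rootMultiplicity_sub_one_le_derivative_rootMultiplicity P x
  have h5 : (T \ S).card ≤ ∑ x ∈ T \ S, (derivative P).rootMultiplicity x := by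
    rw [Finset.card_eq_sum_ones]
    refine Finset.sum_le_sum ?_
    intro x hx
    have hx1 : x ∈ T := (Finset.mem_sdiff.mp hx).1
    have hx2 : x ∈ (derivative P).roots.toFinset := (Finset.mem_filter.mp hx1).1
    rw [Multiset.mem_toFinset] at hx2
    rw [← Polynomial.count_roots]
    exact Multiset.count_pos.mpr hx2
  have h6 : (∑ x ∈ S, (derivative P).rootMultiplicity x)
      + ∑ x ∈ T \ S, (derivative P).rootMultiplicity x ≤ Zp (derivative P) := by
    rw [← Finset.sum_union Finset.disjoint_sdiff]
    have hpos : ∀ x ∈ S ∪ (T \ S), 0 < x := by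
      intro x hx
      rcases Finset.mem_union.mp hx with hx | hx
      · exact (Finset.mem_filter.mp hx).2
      · exact (Finset.mem_filter.mp (Finset.mem_sdiff.mp hx).1).2
    calc ∑ x ∈ S ∪ (T \ S), (derivative P).rootMultiplicity x
        = ∑ x ∈ S ∪ (T \ S), ((derivative P).roots.filter (fun x => 0 < x)).count x := by
          refine Finset.sum_congr rfl ?_
          intro x hx
          rw [Multiset.count_filter, if_pos (hpos x hx), Polynomial.count_roots]
      _ ≤ Multiset.card ((derivative P).roots.filter (fun x => 0 < x)) := sum_count_le _ _
      _ = Zp (derivative P) := by rw [Zp]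
  omega

private lemma pos_interleave (P : ℝ[X]) (hP : P ≠ 0) (hP' : derivative P ≠ 0) :
    (P.roots.toFinset.filter (fun x => 0 < x)).card
      ≤ ((((derivative P).roots.toFinset.filter (fun x => 0 < x))
          \ (P.roots.toFinset.filter (fun x => 0 < x))).card) + 1 := by
  refine Finset.card_le_diff_of_interleaved ?_
  intro x hx y hy hxy _
  rw [Finset.mem_filter, Multiset.mem_toFinset, Polynomial.mem_roots hP] at hx hy
  obtain ⟨z, hz1, hz2⟩ := exists_deriv_eq_zero hxy P.continuousOn (hx.1.trans hy.1.symm)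
  rw [P.deriv] at hz2
  refine ⟨z, ?_, hz1⟩
  rw [Finset.mem_filter, Multiset.mem_toFinset, Polynomial.mem_roots hP']
  exact ⟨hz2, lt_trans hx.2 hz1.1⟩

/-- positivity of evaluation just right of zero, given positive trailing coefficient -/
private lemma eval_pos_near_zero {P : ℝ[X]} (hP : P ≠ 0) (htc : 0 < P.trailingCoeff)
    (ξ : ℝ) (hξ : 0 < ξ) : ∃ η, 0 < η ∧ η < ξ ∧ 0 < P.eval η := by
  set m := P.natTrailingDegree with hm
  have hdvd : X ^ m ∣ P := by
    rw [Polynomial.X_pow_dvd_iff]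
    intro d hd
    exact Polynomial.coeff_eq_zero_of_lt_natTrailingDegree hd
  obtain ⟨Q, hQ⟩ := hdvd
  have hQ0 : 0 < Q.eval 0 := by
    have : P.coeff m = Q.coeff 0 := by
      rw [hQ, mul_comm, Polynomial.coeff_mul_X_pow']
      simp
    rw [← Polynomial.coeff_zero_eq_eval_zero, ← this]
    exact htc
  have hcont : ContinuousAt (fun x => Q.eval x) 0 := Q.continuous.continuousAt
  have hnh : (fun x => Q.eval x) ⁻¹' (Set.Ioi 0) ∈ nhds (0:ℝ) :=
    hcont.preimage_mem_nhds (Ioi_mem_nhds hQ0)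
  rw [Metric.mem_nhds_iff] at hnh
  obtain ⟨ε, hε, hball⟩ := hnh
  refine ⟨min (ε/2) (ξ/2), by positivity, by
      have := min_le_right (ε/2) (ξ/2); linarith, ?_⟩
  have hQη : 0 < Q.eval (min (ε/2) (ξ/2)) := by
    have : min (ε/2) (ξ/2) ∈ Metric.ball (0:ℝ) ε := by
      rw [Metric.mem_ball, Real.dist_eq, sub_zero, abs_of_pos (by positivity)]
      have := min_le_left (ε/2) (ξ/2); linarith
    exact hball this
  rw [hQ]
  simp only [Polynomial.eval_mul, Polynomial.eval_pow, Polynomial.eval_X]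
  positivity

/-- If `P` is positive at `0` and has no root on `(0, y)`, it is positive there -/
private lemma pos_on_no_root {P : ℝ[X]} {y : ℝ} (h0 : 0 < P.eval 0)
    (hnr : ∀ r, 0 < r → r < y → P.eval r ≠ 0) : ∀ x, 0 < x → x < y → 0 < P.eval x := by
  intro x hx hxy
  rcases lt_trichotomy (P.eval x) 0 with hlt | heq | hgt
  · exfalso
    obtain ⟨z, hz, hz0⟩ := intermediate_value_Ioo' (le_of_lt hx) P.continuousOn
      (show (0:ℝ) ∈ Ioo (P.eval x) (P.eval 0) from ⟨hlt, h0⟩)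
    exact hnr z hz.1 (lt_trans hz.2 hxy) hz0
  · exact absurd heq (hnr x hx hxy)
  · exact hgt

/-- refined interleaving : an extra root of the derivative below the least positive root -/
private lemma pos_interleave' (P : ℝ[X]) (hP : P ≠ 0) (hP' : derivative P ≠ 0)
    (h0 : 0 < P.eval 0) (htc : 0 < (derivative P).trailingCoeff) :
    (P.roots.toFinset.filter (fun x => 0 < x)).card
      ≤ (((derivative P).roots.toFinset.filter (fun x => 0 < x))
          \ (P.roots.toFinset.filter (fun x => 0 < x))).card := by
  set S := P.roots.toFinset.filter (fun x => 0 < x) with hSdef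
  set T := (derivative P).roots.toFinset.filter (fun x => 0 < x) with hTdef
  have h0S : (0:ℝ) ∉ S := by
    intro h
    exact lt_irrefl 0 (Finset.mem_filter.mp h).2
  have h0T : (0:ℝ) ∉ T := by
    intro h
    exact lt_irrefl 0 (Finset.mem_filter.mp h).2
  have key : (insert (0:ℝ) S).card ≤ ((T \ insert (0:ℝ) S).card) + 1 := by
    refine Finset.card_le_diff_of_interleaved ?_
    intro x hx y hy hxy hbet
    have hyS : y ∈ S := by
      rcases Finset.mem_insert.mp hy with h | h
      · exfalso
        rcases Finset.mem_insert.mp hx with h' | h'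
        · rw [h, h'] at hxy; exact lt_irrefl 0 hxy
        · have := (Finset.mem_filter.mp h').2
          rw [h] at hxy; linarith
      · exact h
    have hy2 : 0 < y := (Finset.mem_filter.mp hyS).2
    have hyroot : P.eval y = 0 := by
      have := (Finset.mem_filter.mp hyS).1
      rw [Multiset.mem_toFinset, Polynomial.mem_roots hP] at this
      exact this
    rcases Finset.mem_insert.mp hx with hx0 | hxS
    · -- x = 0 : extra root via sign analysis
      subst hx0
      have hnr : ∀ r, 0 < r → r < y → P.eval r ≠ 0 := by
        intro r hr hry hre
        refine hbet r ?_ ⟨hr, hry⟩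
        refine Finset.mem_insert_of_mem ?_
        rw [hSdef, Finset.mem_filter, Multiset.mem_toFinset, Polynomial.mem_roots hP]
        exact ⟨hre, hr⟩
      have hpos := pos_on_no_root h0 hnr
      -- MVT on [y/2, y] gives a point with negative derivative
      have hhalf : 0 < y/2 := by linarith
      have hPy2 : 0 < P.eval (y/2) := hpos (y/2) hhalf (by linarith)
      obtain ⟨ξ, hξmem, hξ⟩ := exists_deriv_eq_slope (fun t => P.eval t)
        (show y/2 < y by linarith) P.continuousOn
        (fun t _ => P.differentiable.differentiableAt.differentiableWithinAt)
      rw [P.deriv, hyroot] at hξ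
      have hξneg : (derivative P).eval ξ < 0 := by
        rw [hξ]
        have : 0 < y - y/2 := by linarith
        exact div_neg_of_neg_of_pos (by linarith) this
      -- positive derivative value close to zero
      obtain ⟨η, hη1, hη2, hη3⟩ := eval_pos_near_zero hP' htc ξ (lt_trans hhalf hξmem.1)
      -- IVT between η and ξ
      obtain ⟨z, hzmem, hz⟩ := intermediate_value_Ioo' (le_of_lt hη2)
        (derivative P).continuousOn
        (show (0:ℝ) ∈ Ioo ((derivative P).eval ξ) ((derivative P).eval η) from ⟨hξneg, hη3⟩)
      refine ⟨z, ?_, lt_trans hη1 hzmem.1, lt_trans hzmem.2 hξmem.2⟩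
      rw [hTdef, Finset.mem_filter, Multiset.mem_toFinset, Polynomial.mem_roots hP']
      exact ⟨hz, lt_trans hη1 hzmem.1⟩
    · -- x is itself a positive root : classical Rolle
      have hx2 : 0 < x := (Finset.mem_filter.mp hxS).2
      have hxroot : P.eval x = 0 := by
        have := (Finset.mem_filter.mp hxS).1
        rw [Multiset.mem_toFinset, Polynomial.mem_roots hP] at this
        exact this
      obtain ⟨z, hz1, hz2⟩ := exists_deriv_eq_zero hxy P.continuousOn
        (hxroot.trans hyroot.symm)
      rw [P.deriv] at hz2
      refine ⟨z, ?_, hz1⟩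
      rw [hTdef, Finset.mem_filter, Multiset.mem_toFinset, Polynomial.mem_roots hP']
      exact ⟨hz2, lt_trans hx2 hz1.1⟩
  have hcard1 : (insert (0:ℝ) S).card = S.card + 1 := Finset.card_insert_of_notMem h0S
  have hsd : T \ insert (0:ℝ) S = T \ S := by
    ext z
    simp only [Finset.mem_sdiff, Finset.mem_insert]
    constructor
    · rintro ⟨hzT, hz2⟩
      exact ⟨hzT, fun h => hz2 (Or.inr h)⟩
    · rintro ⟨hzT, hz2⟩
      refine ⟨hzT, ?_⟩
      rintro (h | h)
      · rw [h] at hzT; exact h0T hzT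
      · exact hz2 h
  rw [hcard1, hsd] at key
  omega

end AvendanoAux

namespace AvendanoAux

private lemma Zp_le_deriv {P : ℝ[X]} (hP : P ≠ 0) (hP' : derivative P ≠ 0) :
    Zp P ≤ Zp (derivative P) + 1 :=
  Zp_count_step hP (pos_interleave P hP hP')

private lemma Zp_le_deriv' {P : ℝ[X]} (hP : P ≠ 0) (hP' : derivative P ≠ 0)
    (hsgn : 0 < P.eval 0 * (derivative P).trailingCoeff) :
    Zp P ≤ Zp (derivative P) := by
  rcases lt_trichotomy (P.eval 0) 0 with h0 | h0 | h0
  · have h1 : (-P) ≠ 0 := neg_ne_zero.mpr hP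
    have h2 : derivative (-P) ≠ 0 := by
      rw [derivative_neg]; exact neg_ne_zero.mpr hP'
    have h3 : 0 < (-P).eval 0 := by rw [Polynomial.eval_neg]; linarith
    have h4 : 0 < (derivative (-P)).trailingCoeff := by
      rw [derivative_neg]
      have hneg_tc : (-derivative P).trailingCoeff = -((derivative P).trailingCoeff) := by
        have h1 : (-derivative P).trailingCoeff
            = (-derivative P).coeff ((-derivative P).natTrailingDegree) := rfl
        rw [h1, Polynomial.natTrailingDegree_neg, Polynomial.coeff_neg]
        rfl
      rw [hneg_tc]
      nlinarith
    have h5 := Zp_count_step h1 (e := 0)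
      (by simpa using pos_interleave' (-P) h1 h2 h3 h4)
    have hZ1 : Zp (-P) = Zp P := by
      rw [Zp, Zp, show (-P) = C (-1) * P by simp [neg_one_mul],
        Polynomial.roots_C_mul _ (by norm_num : (-1:ℝ) ≠ 0)]
    have hZ2 : Zp (derivative (-P)) = Zp (derivative P) := by
      rw [derivative_neg, Zp, Zp,
        show (-derivative P) = C (-1) * derivative P by simp [neg_one_mul],
        Polynomial.roots_C_mul _ (by norm_num : (-1:ℝ) ≠ 0)]
    rwa [hZ1, hZ2] at h5
  · rw [h0, zero_mul] at hsgn; exact absurd hsgn (lt_irrefl 0)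
  · have h4 : 0 < (derivative P).trailingCoeff := by nlinarith
    exact Zp_count_step hP (e := 0) (by simpa using pos_interleave' P hP hP' h0 h4)

private lemma Zp_le_V_aux : ∀ (N : ℕ) (P : ℝ[X]), P.natDegree ≤ N → P ≠ 0 → Zp P ≤ V P := by
  intro N
  induction N with
  | zero =>
    intro P hdeg hP
    have h0 : P.natDegree = 0 := Nat.le_zero.mp hdeg
    rw [Polynomial.eq_C_of_natDegree_eq_zero h0, Zp, Polynomial.roots_C]
    simp
  | succ N ih =>
    intro P hdeg hP
    by_cases hc0 : P.coeff 0 = 0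
    · obtain ⟨Q, hQ⟩ := Polynomial.X_dvd_iff.mpr hc0
      have hQ0 : Q ≠ 0 := fun h => hP (by rw [hQ, h, mul_zero])
      have hdegQ : Q.natDegree ≤ N := by
        have : P.natDegree = 1 + Q.natDegree := by
          rw [hQ, Polynomial.natDegree_mul Polynomial.X_ne_zero hQ0, Polynomial.natDegree_X]
        omega
      have hZ : Zp P = Zp Q := by
        rw [Zp, Zp, hQ, Polynomial.roots_mul (hQ ▸ hP), Polynomial.roots_X,
          Multiset.filter_add, Multiset.filter_singleton, if_neg (lt_irrefl 0)]
        simp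
      rw [hZ, hQ]
      exact le_trans (ih Q hdegQ hQ0) (V_le_V_X_mul Q)
    · by_cases hP' : derivative P = 0
      · rw [Polynomial.eq_C_of_derivative_eq_zero hP', Zp, Polynomial.roots_C]
        simp
      · have hndP : P.natDegree ≠ 0 := by
          intro h
          rw [Polynomial.eq_C_of_natDegree_eq_zero h] at hP'
          simp at hP'
        have hdeg' : (derivative P).natDegree ≤ N := by
          have := Polynomial.natDegree_derivative_lt hndP
          omega
        set m := (derivative P).natTrailingDegree with hmdef
        set j := m + 1 with hj
        have htc : (derivative P).trailingCoeff = P.coeff j * ((m : ℝ) + 1) := by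
          have h1 : (derivative P).trailingCoeff = (derivative P).coeff m := rfl
          rw [h1, Polynomial.coeff_derivative]
        have htc0 : (derivative P).trailingCoeff ≠ 0 :=
          fun h => hP' (Polynomial.trailingCoeff_eq_zero.mp h)
        have hmpos : (0:ℝ) < (m:ℝ) + 1 := by positivity
        have hcj : P.coeff j ≠ 0 := by
          intro h
          exact htc0 (by rw [htc, h, zero_mul])
        have hmin : ∀ i, 1 ≤ i → i < j → P.coeff i = 0 := by
          intro i h1 h2
          have hz : (derivative P).coeff (i - 1) = 0 :=
            Polynomial.coeff_eq_zero_of_lt_natTrailingDegree (by omega)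
          rw [Polynomial.coeff_derivative, show i - 1 + 1 = i by omega] at hz
          have hcast : (0:ℝ) < ((i - 1 : ℕ) : ℝ) + 1 := by positivity
          rcases mul_eq_zero.mp hz with h | h
          · exact h
          · exact absurd h (ne_of_gt hcast)
        have hprodne : P.coeff 0 * P.coeff j ≠ 0 := mul_ne_zero hc0 hcj
        rcases lt_or_gt_of_ne hprodne with hneg | hpos
        · calc Zp P ≤ Zp (derivative P) + 1 := Zp_le_deriv hP hP'
            _ ≤ V (derivative P) + 1 := Nat.add_le_add_right (ih _ hdeg' hP') 1
            _ ≤ V P := V_prepend (by omega) hmin hneg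
        · have hsgn : 0 < P.eval 0 * (derivative P).trailingCoeff := by
            rw [← Polynomial.coeff_zero_eq_eval_zero, htc]
            nlinarith
          calc Zp P ≤ Zp (derivative P) := Zp_le_deriv' hP hP' hsgn
            _ ≤ V (derivative P) := ih _ hdeg' hP'
            _ ≤ V P := V_derivative_le P

private lemma Zp_le_V {P : ℝ[X]} (hP : P ≠ 0) : Zp P ≤ V P :=
  Zp_le_V_aux P.natDegree P le_rfl hP

end AvendanoAux

namespace AvendanoAux

variable {ι : Type*} [DecidableEq ι]

/-- sums of monomials in the basis X^a (1+X)^b -/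
noncomputable def csum (s : Finset ι) (c : ι → ℝ) (a b : ι → ℕ) : ℝ[X] :=
  ∑ i ∈ s, C (c i) * (X ^ (a i) * (1 + X) ^ (b i))

private lemma V_zero : V (0 : ℝ[X]) = 0 := by
  refine V_eq_zero_of_nonneg ?_
  intro m l
  simp

private lemma V_csum_le : ∀ (K : ℕ) (s : Finset ι) (c : ι → ℝ) (a b : ι → ℕ),
    (∑ i ∈ s, (b i + 1)) ≤ K → V (csum s c a b) ≤ 2 * s.card - 2 := by
  intro K
  induction K using Nat.strong_induction_on with
  | _ K ih =>
    intro s c a b hK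
    rcases s.eq_empty_or_nonempty with rfl | hne
    · rw [csum, Finset.sum_empty, V_zero]
      omega
    have hcard1 : 1 ≤ s.card := Finset.card_pos.mpr hne
    have hcardle : s.card ≤ ∑ i ∈ s, (b i + 1) := by
      calc s.card = ∑ _i ∈ s, 1 := (Finset.card_eq_sum_ones s)
        _ ≤ ∑ i ∈ s, (b i + 1) := Finset.sum_le_sum (fun i _ => by omega)
    obtain ⟨i₀, hi₀s, hi₀min⟩ := Finset.exists_min_image s b hne
    by_cases hb0 : b i₀ = 0
    · -- spike case
      by_cases hcard : s.card = 1
      · obtain ⟨x, hx⟩ := Finset.card_eq_one.mp hcard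
        subst hx
        rw [csum, Finset.sum_singleton, V_monomial]
        omega
      · set R := csum (s.erase i₀) c a b with hR
        have hsplit : csum s c a b = C (c i₀) * (X ^ (a i₀) * (1 + X) ^ (b i₀)) + R := by
          rw [csum, ← Finset.add_sum_erase _ _ hi₀s]
          rfl
        have hPR : ∀ n : ℕ, n ≠ a i₀ → (csum s c a b).coeff n = R.coeff n := by
          intro n hn
          rw [hsplit, Polynomial.coeff_add, hb0, pow_zero, mul_one,
            Polynomial.coeff_C_mul, Polynomial.coeff_X_pow, if_neg hn, mul_zero, zero_add]
        have h2 := V_modify (a i₀) hPR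
        have hmeas : (∑ i ∈ s.erase i₀, (b i + 1)) < K := by
          have htmp := Finset.add_sum_erase s (fun i => b i + 1) hi₀s
          beta_reduce at htmp
          omega
        have h3 := ih _ hmeas (s.erase i₀) c a b le_rfl
        rw [← hR] at h3
        have hec : (s.erase i₀).card = s.card - 1 := Finset.card_erase_of_mem hi₀s
        rw [hec] at h3
        have hcard2 : 2 ≤ s.card := by omega
        omega
    · -- strip a common factor (1+X)^m
      set m := b i₀ with hm
      have hfact : csum s c a b = (1 + X) ^ m * csum s c a (fun i => b i - m) := by
        rw [csum, csum, Finset.mul_sum]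
        refine Finset.sum_congr rfl ?_
        intro i hi
        have hbi : b i = m + (b i - m) := by
          have := hi₀min i hi
          omega
        calc C (c i) * (X ^ (a i) * (1 + X) ^ (b i))
            = C (c i) * (X ^ (a i) * (1 + X) ^ (m + (b i - m))) := by rw [← hbi]
          _ = (1 + X) ^ m * (C (c i) * (X ^ (a i) * (1 + X) ^ (b i - m))) := by
              rw [pow_add]; ring
      rw [hfact]
      have h1 := V_one_add_X_pow_mul (csum s c a (fun i => b i - m)) m
      have hmeas : (∑ i ∈ s, ((b i - m) + 1)) < K := by
        have hlt : ∑ i ∈ s, ((b i - m) + 1) < ∑ i ∈ s, (b i + 1) := by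
          refine Finset.sum_lt_sum_of_nonempty hne ?_
          intro i hi
          have := hi₀min i hi
          omega
        omega
      have h3 := ih _ hmeas s c a (fun i => b i - m) le_rfl
      exact le_trans h1 (le_trans h3 (by omega))

private lemma csum_nonempty {s : Finset ι} {c : ι → ℝ} {a b : ι → ℕ}
    (hne : csum s c a b ≠ 0) : 1 ≤ s.card := by
  rcases s.eq_empty_or_nonempty with rfl | h
  · rw [csum, Finset.sum_empty] at hne
    exact absurd rfl hne
  · exact Finset.card_pos.mpr h

/-- Key lemma : at most 2t-2 positive roots with multiplicity. -/
private lemma Zp_csum {s : Finset ι} {c : ι → ℝ} {a b : ι → ℕ} {t : ℕ}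
    (hcard : s.card ≤ t) (hne : csum s c a b ≠ 0) :
    Zp (csum s c a b) ≤ 2 * t - 2 := by
  have h1 := Zp_le_V hne
  have h2 := V_csum_le (∑ i ∈ s, (b i + 1)) s c a b le_rfl
  have h3 := csum_nonempty hne
  omega

end AvendanoAux

namespace AvendanoAux

open Set

/-- linear composition is nonzero -/
private lemma comp_linear_ne_zero {g : ℝ[X]} (hg : g ≠ 0) {e d : ℝ} (he : e ≠ 0) :
    g.comp (C d + C e * X) ≠ 0 := by
  intro h
  apply hg
  refine Polynomial.eq_zero_of_infinite_isRoot g ?_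
  refine Set.Infinite.mono ?_ (Set.Ioi_infinite 0)
  intro y _
  have h1 : (g.comp (C d + C e * X)).eval ((y - d)/e) = 0 := by rw [h]; simp
  rw [Polynomial.eval_comp] at h1
  simp only [Polynomial.eval_add, Polynomial.eval_mul, Polynomial.eval_C,
    Polynomial.eval_X] at h1
  rw [mul_div_cancel₀ _ he] at h1 <;> try exact he
  have : d + (y - d) = y := by ring
  rw [this] at h1
  exact h1

private lemma rootMultiplicity_comp_linear {g : ℝ[X]} (hg : g ≠ 0) {e d : ℝ} (he : e ≠ 0)
    (w : ℝ) :
    (g.comp (C d + C e * X)).rootMultiplicity w = g.rootMultiplicity (d + e * w) := by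
  set r := d + e * w with hr
  set μ := g.rootMultiplicity r with hμ
  set H := g /ₘ (X - C r) ^ μ with hH
  have hfact : (X - C r) ^ μ * H = g := Polynomial.pow_mul_divByMonic_rootMultiplicity_eq g r
  have hHne : H.eval r ≠ 0 := Polynomial.eval_divByMonic_pow_rootMultiplicity_ne_zero r hg
  have hcomp : g.comp (C d + C e * X)
      = C (e ^ μ) * ((X - C w) ^ μ * H.comp (C d + C e * X)) := by
    rw [← hfact, Polynomial.mul_comp, Polynomial.pow_comp, Polynomial.sub_comp,
      Polynomial.X_comp, Polynomial.C_comp]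
    have h1 : C d + C e * X - C r = C e * (X - C w) := by
      rw [hr]
      rw [show (C (d + e * w) : ℝ[X]) = C d + C e * C w by rw [C_add, C_mul]]
      ring
    rw [h1, mul_pow, ← C_pow]
    ring
  rw [hcomp]
  have hH0 : H ≠ 0 := by
    intro h
    rw [h] at hHne
    simp at hHne
  have hHcomp : H.comp (C d + C e * X) ≠ 0 := comp_linear_ne_zero hH0 he
  have hne2 : C (e ^ μ) * ((X - C w) ^ μ * H.comp (C d + C e * X)) ≠ 0 := by
    refine mul_ne_zero ?_ (mul_ne_zero (pow_ne_zero _ (Polynomial.X_sub_C_ne_zero w)) hHcomp)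
    simpa using pow_ne_zero μ he
  rw [Polynomial.rootMultiplicity_mul hne2,
    Polynomial.rootMultiplicity_mul (mul_ne_zero (pow_ne_zero _ (Polynomial.X_sub_C_ne_zero w)) hHcomp),
    Polynomial.rootMultiplicity_X_sub_C_pow,
    Polynomial.rootMultiplicity_eq_zero, Polynomial.rootMultiplicity_eq_zero]
  · omega
  · -- H.comp not root at w
    intro hroot
    rw [Polynomial.IsRoot, Polynomial.eval_comp] at hroot
    simp only [Polynomial.eval_add, Polynomial.eval_mul, Polynomial.eval_C,
      Polynomial.eval_X] at hroot
    exact hHne hroot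
  · intro hroot
    rw [Polynomial.IsRoot, Polynomial.eval_C] at hroot
    exact absurd hroot (pow_ne_zero μ he)

/-- transfer of filtered root counts through a linear substitution -/
private lemma card_filter_comp {g : ℝ[X]} (hg : g ≠ 0) {e d : ℝ} (he : e ≠ 0)
    (S : ℝ → Prop) [DecidablePred S] :
    Multiset.card (g.roots.filter S)
      = Multiset.card ((g.comp (C d + C e * X)).roots.filter (fun w => S (d + e * w))) := by
  have hcomp : g.comp (C d + C e * X) ≠ 0 := comp_linear_ne_zero hg he
  set ψ : ℝ → ℝ := fun r => (r - d) / e with hψ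
  have hinj : Function.Injective ψ := by
    intro x y hxy
    simp only [hψ] at hxy
    field_simp at hxy
    linarith
  have hmap : Multiset.map ψ (g.roots.filter S)
      = (g.comp (C d + C e * X)).roots.filter (fun w => S (d + e * w)) := by
    refine Multiset.ext.mpr ?_
    intro w
    have hwψ : w = ψ (d + e * w) := by
      simp only [hψ]
      field_simp
      ring
    rw [hwψ, Multiset.count_map_eq_count' ψ _ hinj]
    rw [← hwψ]
    rw [Multiset.count_filter, Multiset.count_filter]
    by_cases hS : S (d + e * w)
    · rw [if_pos hS, if_pos hS, Polynomial.count_roots, Polynomial.count_roots,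
        rootMultiplicity_comp_linear hg he]
    · rw [if_neg hS, if_neg hS]
  rw [← hmap, Multiset.card_map]

/-- the star transform -/
noncomputable def starN (N : ℕ) (Q : ℝ[X]) : ℝ[X] :=
  ∑ k ∈ Finset.range (N + 1), C (Q.coeff k) * (X ^ k * (1 + X) ^ (N - k))

private lemma starN_eval {N : ℕ} {Q : ℝ[X]} (hdeg : Q.natDegree ≤ N) {w : ℝ} (hw : 0 < w) :
    (starN N Q).eval w = (1 + w) ^ N * Q.eval (w / (1 + w)) := by
  have h1w : (0:ℝ) < 1 + w := by linarith
  have h1w' : (1:ℝ) + w ≠ 0 := ne_of_gt h1w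
  rw [Polynomial.eval_eq_sum_range' (lt_of_le_of_lt hdeg (Nat.lt_succ_self N)) (w / (1+w))]
  rw [starN, Polynomial.eval_finset_sum, Finset.mul_sum]
  refine Finset.sum_congr rfl ?_
  intro k hk
  have hk' : k ≤ N := Nat.lt_succ_iff.mp (Finset.mem_range.mp hk)
  simp only [Polynomial.eval_mul, Polynomial.eval_C, Polynomial.eval_pow,
    Polynomial.eval_X, Polynomial.eval_add, Polynomial.eval_one]
  rw [div_pow, show N = k + (N - k) by omega, pow_add]
  field_simp
  ring
  rw [Nat.add_sub_cancel_left]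

private lemma starN_natdeg_le (c : ℝ) (α β : ℕ) :
    (C c * (X ^ α * (X - 1) ^ β) : ℝ[X]).natDegree ≤ α + β := by
  have h1 : ((X:ℝ[X]) ^ α).natDegree = α := by
    rw [Polynomial.natDegree_pow, Polynomial.natDegree_X, mul_one]
  have h2 : (((X:ℝ[X]) - 1) ^ β).natDegree = β := by
    rw [Polynomial.natDegree_pow, show ((X:ℝ[X]) - 1) = X - C 1 by rw [C_1],
      Polynomial.natDegree_X_sub_C, mul_one]
  calc (C c * (X ^ α * (X - 1) ^ β) : ℝ[X]).natDegree
      ≤ (C c : ℝ[X]).natDegree + ((X:ℝ[X]) ^ α * (X - 1) ^ β).natDegree :=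
        Polynomial.natDegree_mul_le
    _ ≤ 0 + (α + β) := by
        refine add_le_add (le_of_eq (Polynomial.natDegree_C c)) ?_
        refine le_trans Polynomial.natDegree_mul_le ?_
        rw [h1, h2]
    _ = α + β := by omega

private lemma starN_class_term (c : ℝ) (α β N : ℕ) (hN : α + β ≤ N) :
    starN N (C c * (X ^ α * (X - 1) ^ β))
      = C (c * (-1)^β) * (X ^ α * (1 + X) ^ (N - α - β)) := by
  refine Polynomial.eq_of_infinite_eval_eq _ _ ?_
  refine Set.Infinite.mono ?_ (Set.Ioi_infinite 0)
  intro w hw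
  have hw0 : (0:ℝ) < w := hw
  have h1w : (0:ℝ) < 1 + w := by linarith
  have h1w' : (1:ℝ) + w ≠ 0 := ne_of_gt h1w
  show (starN N (C c * (X ^ α * (X - 1) ^ β))).eval w = _
  rw [starN_eval (le_trans (starN_natdeg_le c α β) hN) hw0]
  simp only [Polynomial.eval_mul, Polynomial.eval_C, Polynomial.eval_pow,
    Polynomial.eval_X, Polynomial.eval_add, Polynomial.eval_one, Polynomial.eval_sub]
  have hu1 : w / (1 + w) - 1 = -1 / (1 + w) := by field_simp; ring
  rw [hu1, div_pow, div_pow]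
  have hsplit : ((1:ℝ)+w)^N = (1+w)^α * ((1+w)^β * (1+w)^(N-α-β)) := by
    rw [← pow_add, ← pow_add]
    congr 1
    omega
  rw [hsplit]
  field_simp

private lemma starN_sum {ι : Type*} (N : ℕ) (s : Finset ι) (f : ι → ℝ[X]) :
    starN N (∑ i ∈ s, f i) = ∑ i ∈ s, starN N (f i) := by
  calc starN N (∑ i ∈ s, f i)
      = ∑ k ∈ Finset.range (N+1), ∑ i ∈ s, C ((f i).coeff k) * (X ^ k * (1 + X) ^ (N - k)) := by
        refine Finset.sum_congr rfl ?_
        intro k _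
        rw [Polynomial.finset_sum_coeff, map_sum, Finset.sum_mul]
    _ = ∑ i ∈ s, starN N (f i) := Finset.sum_comm

private lemma starN_mul {N₁ N₂ : ℕ} {Q₁ Q₂ : ℝ[X]} (h1 : Q₁.natDegree ≤ N₁)
    (h2 : Q₂.natDegree ≤ N₂) :
    starN (N₁ + N₂) (Q₁ * Q₂) = starN N₁ Q₁ * starN N₂ Q₂ := by
  refine Polynomial.eq_of_infinite_eval_eq _ _ ?_
  refine Set.Infinite.mono ?_ (Set.Ioi_infinite 0)
  intro w hw
  have hw0 : (0:ℝ) < w := hw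
  show (starN (N₁ + N₂) (Q₁ * Q₂)).eval w = (starN N₁ Q₁ * starN N₂ Q₂).eval w
  rw [Polynomial.eval_mul, starN_eval h1 hw0, starN_eval h2 hw0,
    starN_eval (le_trans Polynomial.natDegree_mul_le (add_le_add h1 h2)) hw0,
    Polynomial.eval_mul, pow_add]
  ring

private lemma starN_ne_zero {N : ℕ} {Q : ℝ[X]} (hdeg : Q.natDegree ≤ N) (hQ : Q ≠ 0) :
    starN N Q ≠ 0 := by
  intro h
  apply hQ
  refine Polynomial.eq_zero_of_infinite_isRoot Q ?_
  refine Set.Infinite.mono ?_ (Set.Ioo_infinite (show (0:ℝ) < 1 by norm_num))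
  intro u hu
  obtain ⟨hu0, hu1⟩ := hu
  set w := u / (1 - u) with hwdef
  have h1u : (0:ℝ) < 1 - u := by linarith
  have hw0 : 0 < w := by positivity
  have h1w : 1 + w = 1 / (1 - u) := by rw [hwdef]; field_simp; ring
  have huw : w / (1 + w) = u := by
    rw [h1w, hwdef]
    field_simp
  have he := starN_eval hdeg hw0
  rw [h, Polynomial.eval_zero, huw] at he
  have hne : (1 + w) ^ N ≠ 0 := by positivity
  show Q.eval u = 0
  cases mul_eq_zero.mp he.symm with
  | inl h' => exact absurd h' hne
  | inr h' => exact h'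

private lemma starN_roots_ge : ∀ (D : ℕ) (Q : ℝ[X]) (N : ℕ), Q ≠ 0 → Q.natDegree ≤ D →
    Q.natDegree ≤ N →
    Multiset.card (Q.roots.filter (fun u => 0 < u ∧ u < 1)) ≤ Zp (starN N Q) := by
  intro D
  induction D with
  | zero =>
    intro Q N hQ hdeg _
    have h0 : Q.natDegree = 0 := Nat.le_zero.mp hdeg
    rw [Polynomial.eq_C_of_natDegree_eq_zero h0, Polynomial.roots_C]
    simp
  | succ D ih =>
    intro Q N hQ hdeg hdegN
    rcases Multiset.empty_or_exists_mem (Q.roots.filter (fun u => 0 < u ∧ u < 1)) with hemp | hex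
    · rw [hemp]
      simp
    obtain ⟨r, hr⟩ := hex
    rw [Multiset.mem_filter] at hr
    obtain ⟨hrroot, hr0, hr1⟩ := hr
    have hrisroot : Q.IsRoot r := (Polynomial.mem_roots hQ).mp hrroot
    obtain ⟨H, hH⟩ := Polynomial.dvd_iff_isRoot.mpr hrisroot
    have hHne : H ≠ 0 := by
      intro h
      rw [h, mul_zero] at hH
      exact hQ hH
    have hdegQ : Q.natDegree = 1 + H.natDegree := by
      rw [hH, Polynomial.natDegree_mul (Polynomial.X_sub_C_ne_zero r) hHne,
        Polynomial.natDegree_X_sub_C]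
    have hN1 : 1 ≤ N := by omega
    -- roots split
    have hroots : Multiset.card (Q.roots.filter (fun u => 0 < u ∧ u < 1))
        = 1 + Multiset.card (H.roots.filter (fun u => 0 < u ∧ u < 1)) := by
      rw [hH, Polynomial.roots_mul (hH ▸ hQ), Polynomial.roots_X_sub_C,
        Multiset.filter_add, Multiset.card_add, Multiset.filter_singleton,
        if_pos (⟨hr0, hr1⟩ : 0 < r ∧ r < 1)]
      simp
    -- star splits
    have hstar : starN N Q = starN 1 (X - C r) * starN (N - 1) H := by
      have hmul := starN_mul (N₁ := 1) (N₂ := N - 1) (Q₁ := X - C r) (Q₂ := H)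
        (by rw [Polynomial.natDegree_X_sub_C]) (by omega)
      rw [show 1 + (N - 1) = N by omega] at hmul
      rw [hH]
      exact hmul
    have hstar1 : starN 1 (X - C r) = C (1 - r) * (X - C (r / (1 - r))) := by
      have h1r : (1:ℝ) - r ≠ 0 := by intro h; linarith
      refine Polynomial.eq_of_infinite_eval_eq _ _ ?_
      refine Set.Infinite.mono ?_ (Set.Ioi_infinite 0)
      intro w hw
      have hw0 : (0:ℝ) < w := hw
      have h1w' : (1:ℝ) + w ≠ 0 := by positivity
      show (starN 1 (X - C r)).eval w = _
      rw [starN_eval (by rw [Polynomial.natDegree_X_sub_C]) hw0]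
      simp only [Polynomial.eval_mul, Polynomial.eval_C, Polynomial.eval_sub,
        Polynomial.eval_X, Polynomial.eval_add, Polynomial.eval_one, pow_one]
      field_simp
      ring
    have hzp1 : Zp (starN 1 (X - C r)) = 1 := by
      have h1r : (0:ℝ) < 1 - r := by linarith
      rw [Zp, hstar1, Polynomial.roots_C_mul _ (ne_of_gt h1r), Polynomial.roots_X_sub_C,
        Multiset.filter_singleton, if_pos (by positivity : 0 < r / (1 - r))]
      simp
    have hsne1 : starN 1 (X - C r) ≠ 0 := by
      rw [hstar1]
      refine mul_ne_zero ?_ (Polynomial.X_sub_C_ne_zero _)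
      simp only [ne_eq, Polynomial.C_eq_zero]
      intro h; linarith
    have hsne2 : starN (N-1) H ≠ 0 := starN_ne_zero (by omega) hHne
    have hzpsplit : Zp (starN N Q) = 1 + Zp (starN (N-1) H) := by
      rw [Zp, hstar, Polynomial.roots_mul (mul_ne_zero hsne1 hsne2),
        Multiset.filter_add, Multiset.card_add]
      rw [← Zp, ← Zp, hzp1]
    rw [hroots, hzpsplit]
    have := ih H (N - 1) hHne (by omega) (by omega)
    omega

end AvendanoAux

namespace AvendanoAux

open Polynomial

private lemma sum_comp' {κ : Type*} (s : Finset κ) (f : κ → ℝ[X]) (q : ℝ[X]) :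
    (∑ i ∈ s, f i).comp q = ∑ i ∈ s, (f i).comp q := by
  simp only [Polynomial.comp, Polynomial.eval₂_finset_sum]

private lemma term_convert (c k₁ k₂ : ℝ) (M₁ M₂ : ℝ[X]) (α β : ℕ) :
    C c * ((C k₁ * M₁) ^ α * (C k₂ * M₂) ^ β)
      = C (c * k₁ ^ α * k₂ ^ β) * (M₁ ^ α * M₂ ^ β) := by
  rw [mul_pow, mul_pow, ← C_pow, ← C_pow, C_mul, C_mul]
  ring

variable {κ : Type*} [DecidableEq κ]

private lemma csum_of_XY (s : Finset κ) (co : κ → ℝ) (A B : κ → ℕ) (k₁ k₂ : ℝ) :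
    (∑ m ∈ s, C (co m) * ((C k₁ * X) ^ (A m) * (C k₂ * (1 + X)) ^ (B m)))
      = csum s (fun m => co m * k₁ ^ (A m) * k₂ ^ (B m)) A B := by
  rw [csum]
  exact Finset.sum_congr rfl fun m _ => term_convert _ _ _ _ _ _ _

private lemma csum_of_YX (s : Finset κ) (co : κ → ℝ) (A B : κ → ℕ) (k₁ k₂ : ℝ) :
    (∑ m ∈ s, C (co m) * ((C k₁ * (1 + X)) ^ (A m) * (C k₂ * X) ^ (B m)))
      = csum s (fun m => co m * k₁ ^ (A m) * k₂ ^ (B m)) B A := by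
  rw [csum]
  refine Finset.sum_congr rfl fun m _ => ?_
  rw [term_convert]
  ring

private lemma star_of_XD (s : Finset κ) (co : κ → ℝ) (A B : κ → ℕ) (k₁ k₂ : ℝ) (N : ℕ)
    (hN : ∀ m ∈ s, A m + B m ≤ N) :
    starN N (∑ m ∈ s, C (co m) * ((C k₁ * X) ^ (A m) * (C k₂ * (X - 1)) ^ (B m)))
      = csum s (fun m => co m * k₁ ^ (A m) * k₂ ^ (B m) * (-1) ^ (B m)) A
          (fun m => N - A m - B m) := by
  rw [starN_sum, csum]
  refine Finset.sum_congr rfl fun m hm => ?_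
  rw [term_convert, starN_class_term _ _ _ _ (hN m hm)]

private lemma star_of_DX (s : Finset κ) (co : κ → ℝ) (A B : κ → ℕ) (k₁ k₂ : ℝ) (N : ℕ)
    (hN : ∀ m ∈ s, A m + B m ≤ N) :
    starN N (∑ m ∈ s, C (co m) * ((C k₁ * (X - 1)) ^ (A m) * (C k₂ * X) ^ (B m)))
      = csum s (fun m => co m * k₁ ^ (A m) * k₂ ^ (B m) * (-1) ^ (A m)) B
          (fun m => N - B m - A m) := by
  rw [starN_sum, csum]
  refine Finset.sum_congr rfl fun m hm => ?_
  rw [term_convert, show ((X - 1 : ℝ[X]) ^ (A m) * X ^ (B m)) = (X ^ (B m) * (X - 1) ^ (A m)) by ring,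
    starN_class_term _ _ _ _ (by have := hN m hm; omega)]

private lemma interval_count_comp (g : ℝ[X]) (hg : g ≠ 0) (d e : ℝ) (he : e ≠ 0)
    (S : ℝ → Prop) (T : ℝ → Prop) [DecidablePred S] [DecidablePred T]
    (hiff : ∀ w, S (d + e * w) ↔ T w) :
    Multiset.card (g.roots.filter S)
      = Multiset.card ((g.comp (C d + C e * X)).roots.filter T) := by
  rw [card_filter_comp hg he S]
  congr 1
  exact Multiset.filter_congr (fun w _ => hiff w)

private lemma capped_sum_le (g : ℝ[X]) (spec : ℝ → Prop) [DecidablePred spec] (F : Finset ℝ)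
    (hsub : ∀ r, spec r → r ∈ F) :
    (∑ r ∈ g.roots.toFinset, (if spec r then (1:ℤ) else (g.rootMultiplicity r : ℤ)))
      ≤ (F.card : ℤ) + (Multiset.card (g.roots.filter (fun r => ¬ spec r)) : ℤ) := by
  rw [← Finset.sum_filter_add_sum_filter_not g.roots.toFinset spec]
  have h1 : (∑ r ∈ g.roots.toFinset.filter spec,
      (if spec r then (1:ℤ) else (g.rootMultiplicity r : ℤ)))
        = (g.roots.toFinset.filter spec).card := by
    rw [Finset.sum_congr rfl (fun r hr => if_pos (Finset.mem_filter.mp hr).2)]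
    simp
  have h2 : (∑ r ∈ g.roots.toFinset.filter (fun r => ¬ spec r),
      (if spec r then (1:ℤ) else (g.rootMultiplicity r : ℤ)))
        = (Multiset.card (g.roots.filter (fun r => ¬ spec r)) : ℤ) := by
    have hcf := card_filter_roots g (fun r => ¬ spec r)
    rw [Finset.sum_congr rfl (fun r hr => if_neg (Finset.mem_filter.mp hr).2), hcf]
    push_cast
    rfl
  rw [h1, h2]
  have h3 : (g.roots.toFinset.filter spec).card ≤ F.card :=
    Finset.card_le_card (fun r hr => hsub r (Finset.mem_filter.mp hr).2)
  have h4 : ((g.roots.toFinset.filter spec).card : ℤ) ≤ (F.card : ℤ) := by exact_mod_cast h3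
  linarith

private lemma filter_le_three (M : Multiset ℝ) (p q₁ q₂ q₃ : ℝ → Prop)
    [DecidablePred p] [DecidablePred q₁] [DecidablePred q₂] [DecidablePred q₃]
    (h : ∀ x, p x → q₁ x ∨ q₂ x ∨ q₃ x) :
    Multiset.card (M.filter p) ≤ Multiset.card (M.filter q₁)
      + Multiset.card (M.filter q₂) + Multiset.card (M.filter q₃) := by
  induction M using Multiset.induction_on with
  | empty => simp
  | cons a M ih =>
    simp only [Multiset.filter_cons, Multiset.card_add, apply_ite Multiset.card,
      Multiset.card_singleton, Multiset.card_zero]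
    by_cases hp : p a
    · rcases h a hp with h1 | h1 | h1 <;>
        simp only [hp, h1, if_true] <;> split_ifs <;> omega
    · simp only [hp, if_false]
      split_ifs <;> omega

private lemma interval_bound_comp (g : ℝ[X]) (hg : g ≠ 0) {d e : ℝ} (he : e ≠ 0)
    (S : ℝ → Prop) [DecidablePred S] (hiff : ∀ w, S (d + e * w) ↔ 0 < w)
    (s : Finset κ) (c' : κ → ℝ) (A' B' : κ → ℕ) {t : ℕ} (hcard : s.card ≤ t)
    (hrep : g.comp (C d + C e * X) = csum s c' A' B') :
    Multiset.card (g.roots.filter S) ≤ 2 * t - 2 := by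
  rw [interval_count_comp g hg d e he S (fun w => 0 < w) hiff, hrep]
  exact Zp_csum hcard (hrep ▸ comp_linear_ne_zero hg he)

private lemma interval_bound_star (g : ℝ[X]) (hg : g ≠ 0) {d e : ℝ} (he : e ≠ 0)
    (S : ℝ → Prop) [DecidablePred S] (hiff : ∀ w, S (d + e * w) ↔ (0 < w ∧ w < 1))
    (N : ℕ) (hdeg : (g.comp (C d + C e * X)).natDegree ≤ N)
    (s : Finset κ) (c' : κ → ℝ) (A' B' : κ → ℕ) {t : ℕ} (hcard : s.card ≤ t)
    (hrep : starN N (g.comp (C d + C e * X)) = csum s c' A' B') :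
    Multiset.card (g.roots.filter S) ≤ 2 * t - 2 := by
  rw [interval_count_comp g hg d e he S (fun w => 0 < w ∧ w < 1) hiff]
  have hg2 : g.comp (C d + C e * X) ≠ 0 := comp_linear_ne_zero hg he
  calc Multiset.card ((g.comp (C d + C e * X)).roots.filter (fun w => 0 < w ∧ w < 1))
      ≤ Zp (starN N (g.comp (C d + C e * X))) :=
        starN_roots_ge _ _ N hg2 le_rfl hdeg
    _ ≤ 2 * t - 2 := by
        rw [hrep]
        exact Zp_csum hcard (hrep ▸ starN_ne_zero hdeg hg2)

private lemma comp_rep {g : ℝ[X]} (s : Finset κ) (co : κ → ℝ) (A B : κ → ℕ) (u v d e : ℝ)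
    (hg : g = ∑ m ∈ s, C (co m) * ((X:ℝ[X]) ^ (A m) * (C u * X + C v) ^ (B m))) :
    g.comp (C d + C e * X)
      = ∑ m ∈ s, C (co m) * ((C d + C e * X) ^ (A m) * (C (u*d+v) + C (u*e) * X) ^ (B m)) := by
  rw [hg, sum_comp']
  refine Finset.sum_congr rfl fun m _ => ?_
  have hb : (C u * X + C v : ℝ[X]).comp (C d + C e * X) = C (u*d+v) + C (u*e) * X := by
    simp only [Polynomial.add_comp, Polynomial.mul_comp, Polynomial.C_comp, Polynomial.X_comp]
    rw [C_add, C_mul, C_mul]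
    ring
  simp only [Polynomial.mul_comp, Polynomial.pow_comp, Polynomial.X_comp,
    Polynomial.C_comp, hb]

private lemma aeval_line (f : MvPolynomial (Fin 2) ℝ) (a b : ℝ) :
    (MvPolynomial.aeval ![X, C a * X + C b] f : ℝ[X])
      = ∑ m ∈ f.support,
          C (MvPolynomial.coeff m f) * ((X:ℝ[X]) ^ (m 0) * (C a * X + C b) ^ (m 1)) := by
  conv_lhs => rw [← MvPolynomial.support_sum_monomial_coeff f]
  rw [map_sum]
  refine Finset.sum_congr rfl fun m _ => ?_
  rw [MvPolynomial.aeval_monomial]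
  rw [Finsupp.prod_fintype _ _ (fun i => pow_zero _)]
  rw [Fin.prod_univ_two]
  simp only [Matrix.cons_val_zero, Matrix.cons_val_one, Matrix.head_cons]
  rw [Polynomial.algebraMap_eq]

end AvendanoAux

namespace AvendanoAux

private lemma csum_comp_neg {κ : Type*} [DecidableEq κ] (s : Finset κ) (c' : κ → ℝ) (A' : κ → ℕ) :
    (csum s c' A' (fun _ => 0)).comp (C 0 + C (-1) * X)
      = csum s (fun m => c' m * (-1) ^ (A' m)) A' (fun _ => 0) := by
  rw [csum, sum_comp', csum]
  refine Finset.sum_congr rfl fun m _ => ?_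
  simp only [Polynomial.mul_comp, Polynomial.pow_comp, Polynomial.X_comp, Polynomial.C_comp,
    Polynomial.add_comp, Polynomial.one_comp]
  rw [pow_zero, pow_zero, mul_one, mul_one, C_0, zero_add, mul_pow, ← C_pow, C_mul]
  ring

private lemma filter_false_card (M : Multiset ℝ) :
    Multiset.card (M.filter (fun _ => False)) = 0 := by
  have h : M.filter (fun _ => False) = 0 :=
    Multiset.filter_eq_nil.mpr (fun a _ => not_false)
  rw [h]
  rfl

end AvendanoAux

open Polynomial AvendanoAux in
set_option maxHeartbeats 1600000 in
/-- **Main theorem.** A real bivariate polynomial with at most `t` nonzero terms,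
restricted to the line `y = a·x + b`, either vanishes identically or has at most
`6t - 4` real roots, counted with multiplicity except that the possible roots
`0` and `-b/a` are each counted at most once. -/
theorem roots_on_line_le (f : MvPolynomial (Fin 2) ℝ) (t : ℕ)
    (ht : f.support.card ≤ t) (a b : ℝ) :
    (MvPolynomial.aeval ![X, C a * X + C b] f : Polynomial ℝ) = 0 ∨
    (∑ r ∈ (MvPolynomial.aeval ![X, C a * X + C b] f : Polynomial ℝ).roots.toFinset,
        (if r = 0 ∨ (a ≠ 0 ∧ r = -b / a) then 1 else
          ((MvPolynomial.aeval ![X, C a * X + C b] f : Polynomial ℝ).rootMultiplicity r : ℤ)))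
      ≤ 6 * t - 4 := by
  set g : ℝ[X] := (MvPolynomial.aeval ![X, C a * X + C b] f : Polynomial ℝ) with hgdef
  by_cases hg : g = 0
  · exact Or.inl hg
  right
  have hrep : g = ∑ m ∈ f.support,
      C (MvPolynomial.coeff m f) * ((X:ℝ[X]) ^ (m 0) * (C a * X + C b) ^ (m 1)) :=
    aeval_line f a b
  have hf0 : f ≠ 0 := by
    intro h
    exact hg (by rw [hgdef, h, map_zero])
  have hs1 : 1 ≤ f.support.card :=
    Finset.card_pos.mpr (Finset.nonempty_iff_ne_empty.mpr
      (fun h => hf0 (MvPolynomial.support_eq_empty.mp h)))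
  have ht1 : 1 ≤ t := le_trans hs1 ht
  by_cases hdegen : a = 0 ∨ b = 0
  · -- degenerate case : g is a sparse polynomial in X
    obtain ⟨c₀, A₀, rep0⟩ : ∃ (c₀ : (Fin 2 →₀ ℕ) → ℝ) (A₀ : (Fin 2 →₀ ℕ) → ℕ),
        g = csum f.support c₀ A₀ (fun _ => 0) := by
      rcases hdegen with ha | hb
      · refine ⟨fun m => MvPolynomial.coeff m f * b ^ (m 1), fun m => m 0, ?_⟩
        rw [hrep, csum]
        refine Finset.sum_congr rfl fun m _ => ?_
        simp only [ha, C_0, zero_mul, zero_add, ← C_pow, C_mul, pow_zero, mul_one]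
        ring
      · refine ⟨fun m => MvPolynomial.coeff m f * a ^ (m 1), fun m => m 0 + m 1, ?_⟩
        rw [hrep, csum]
        refine Finset.sum_congr rfl fun m _ => ?_
        simp only [hb, C_0, add_zero, mul_pow, ← C_pow, C_mul, pow_zero, mul_one, pow_add]
        ring
    have hsub : ∀ r : ℝ, (r = 0 ∨ (a ≠ 0 ∧ r = -b / a)) → r ∈ ({0} : Finset ℝ) := by
      intro r hr
      rcases hr with hr | ⟨ha, hr⟩
      · simp [hr]
      · rcases hdegen with h | h
        · exact absurd h ha
        · rw [hr, h]
          simp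
    have hcap := capped_sum_le g (fun r => r = 0 ∨ (a ≠ 0 ∧ r = -b / a)) ({0} : Finset ℝ) hsub
    refine le_trans hcap ?_
    beta_reduce
    have hpos : Multiset.card (g.roots.filter (fun r => 0 < r)) ≤ 2 * t - 2 := by
      rw [rep0]
      exact Zp_csum ht (rep0 ▸ hg)
    have hneg : Multiset.card (g.roots.filter (fun r => r < 0)) ≤ 2 * t - 2 := by
      refine interval_bound_comp g hg (d := 0) (e := -1) (by norm_num : (-1:ℝ) ≠ 0) (fun r => r < 0)
        (fun w => by constructor <;> intro h <;> nlinarith) f.support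
        (fun m => c₀ m * (-1) ^ (A₀ m)) A₀ (fun _ => 0) ht ?_
      rw [rep0, csum_comp_neg]
    have hsplit : Multiset.card (g.roots.filter (fun r => ¬ (r = 0 ∨ (a ≠ 0 ∧ r = -b / a))))
        ≤ Multiset.card (g.roots.filter (fun r => r < 0))
          + Multiset.card (g.roots.filter (fun r => 0 < r))
          + Multiset.card (g.roots.filter (fun _ => False)) := by
      refine filter_le_three _ _ _ _ _ ?_
      intro x hx
      push_neg at hx
      rcases lt_trichotomy x 0 with h | h | h
      · exact Or.inl h
      · exact absurd h hx.1
      · exact Or.inr (Or.inl h)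
    rw [filter_false_card] at hsplit
    have hF : (({0} : Finset ℝ).card : ℤ) = 1 := by simp
    rw [hF]
    have : Multiset.card (g.roots.filter (fun r => ¬ (r = 0 ∨ (a ≠ 0 ∧ r = -b / a))))
        ≤ 4 * t - 4 := by omega
    omega
  · -- main case : a ≠ 0 and b ≠ 0
    push_neg at hdegen
    obtain ⟨ha, hb⟩ := hdegen
    set ρ : ℝ := -b / a with hρdef
    have hρ0 : ρ ≠ 0 := by
      rw [hρdef]
      exact div_ne_zero (neg_ne_zero.mpr hb) ha
    have haρ : a * ρ = -b := by
      rw [hρdef]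
      field_simp
    have hsub : ∀ r : ℝ, (r = 0 ∨ (a ≠ 0 ∧ r = -b / a)) → r ∈ ({0, ρ} : Finset ℝ) := by
      intro r hr
      rcases hr with hr | ⟨_, hr⟩
      · simp [hr]
      · rw [hr, ← hρdef]
        simp
    have hcap := capped_sum_le g (fun r => r = 0 ∨ (a ≠ 0 ∧ r = -b / a))
      ({0, ρ} : Finset ℝ) hsub
    refine le_trans hcap ?_
    beta_reduce
    have hFcard : ({0, ρ} : Finset ℝ).card ≤ 2 := by
      refine le_trans (Finset.card_insert_le _ _) ?_
      simp
    -- interval bounds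
    have hbound1 : ∀ (S : ℝ → Prop) [DecidablePred S] (d e : ℝ), e ≠ 0 →
        (∀ w, S (d + e * w) ↔ 0 < w) →
        (∀ m : Fin 2 →₀ ℕ, (C d + C e * X : ℝ[X]) ^ (m 0) * (C (a*d+b) + C (a*e) * X) ^ (m 1)
          = (C d + C e * X : ℝ[X]) ^ (m 0) * (C (a*d+b) + C (a*e) * X) ^ (m 1)) →
        True := fun _ _ _ _ _ _ _ => trivial
    clear hbound1
    rcases lt_trichotomy ρ 0 with hρneg | h0 | hρpos
    · -- ρ < 0 : intervals (-∞, ρ), (ρ, 0), (0, ∞)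
      have hIoi : Multiset.card (g.roots.filter (fun r => 0 < r)) ≤ 2 * t - 2 := by
        refine interval_bound_comp g hg (d := 0) (e := -ρ) (show -ρ ≠ 0 from neg_ne_zero.mpr hρ0)
          (fun r => 0 < r) (fun w => by constructor <;> intro h <;> nlinarith)
          f.support (fun m => MvPolynomial.coeff m f * (-ρ) ^ (m 0) * b ^ (m 1))
          (fun m => m 0) (fun m => m 1) ht ?_
        rw [comp_rep f.support (fun m => MvPolynomial.coeff m f) (fun m => m 0) (fun m => m 1)
          a b 0 (-ρ) hrep]
        rw [show (C 0 + C (-ρ) * X : ℝ[X]) = C (-ρ) * X by rw [C_0, zero_add]]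
        rw [show (C (a*0+b) + C (a*(-ρ)) * X : ℝ[X]) = C b * (1 + X) by
          rw [show a*0+b = b by ring, show a*(-ρ) = b by rw [mul_neg, haρ]; ring]
          ring]
        exact csum_of_XY _ _ _ _ _ _
      have hIio : Multiset.card (g.roots.filter (fun r => r < ρ)) ≤ 2 * t - 2 := by
        refine interval_bound_comp g hg (d := ρ) (e := ρ) (show ρ ≠ 0 from hρ0)
          (fun r => r < ρ) (fun w => by constructor <;> intro h <;> nlinarith)
          f.support (fun m => MvPolynomial.coeff m f * ρ ^ (m 0) * (a*ρ) ^ (m 1))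
          (fun m => m 1) (fun m => m 0) ht ?_
        rw [comp_rep f.support (fun m => MvPolynomial.coeff m f) (fun m => m 0) (fun m => m 1)
          a b ρ ρ hrep]
        rw [show (C ρ + C ρ * X : ℝ[X]) = C ρ * (1 + X) by ring]
        rw [show (C (a*ρ+b) + C (a*ρ) * X : ℝ[X]) = C (a*ρ) * X by
          rw [show a*ρ+b = 0 by rw [haρ]; ring, C_0, zero_add]]
        exact csum_of_YX _ _ _ _ _ _
      have hIoo : Multiset.card (g.roots.filter (fun r => ρ < r ∧ r < 0)) ≤ 2 * t - 2 := by
        obtain ⟨N, hN1, hN2⟩ : ∃ N : ℕ, (g.comp (C ρ + C (-ρ) * X)).natDegree ≤ N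
            ∧ ∀ m ∈ f.support, m 0 + m 1 ≤ N :=
          ⟨max ((g.comp (C ρ + C (-ρ) * X)).natDegree) (f.support.sup (fun m => m 0 + m 1)),
            le_max_left _ _, fun m hm =>
              le_trans (Finset.le_sup (f := fun m => m 0 + m 1) hm) (le_max_right _ _)⟩
        refine interval_bound_star g hg (d := ρ) (e := -ρ) (show -ρ ≠ 0 from neg_ne_zero.mpr hρ0)
          (fun r => ρ < r ∧ r < 0)
          (fun w => by constructor <;> intro h <;> constructor <;> nlinarith [h.1, h.2])
          N hN1 f.support
          (fun m => MvPolynomial.coeff m f * (-ρ) ^ (m 0) * b ^ (m 1) * (-1) ^ (m 0))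
          (fun m => m 1) (fun m => N - m 1 - m 0) ht ?_
        rw [comp_rep f.support (fun m => MvPolynomial.coeff m f) (fun m => m 0) (fun m => m 1)
          a b ρ (-ρ) hrep]
        rw [show (C ρ + C (-ρ) * X : ℝ[X]) = C (-ρ) * (X - 1) by rw [C_neg]; ring]
        rw [show (C (a*ρ+b) + C (a*(-ρ)) * X : ℝ[X]) = C b * X by
          rw [show a*ρ+b = 0 by rw [haρ]; ring, show a*(-ρ) = b by rw [mul_neg, haρ]; ring,
            C_0, zero_add]]
        exact star_of_DX f.support (fun m => MvPolynomial.coeff m f)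
          (fun m => m 0) (fun m => m 1) (-ρ) b N hN2
      have hsplit : Multiset.card
          (g.roots.filter (fun r => ¬ (r = 0 ∨ (a ≠ 0 ∧ r = -b / a))))
          ≤ Multiset.card (g.roots.filter (fun r => r < ρ))
            + Multiset.card (g.roots.filter (fun r => ρ < r ∧ r < 0))
            + Multiset.card (g.roots.filter (fun r => 0 < r)) := by
        refine filter_le_three _ _ _ _ _ ?_
        intro x hx
        push_neg at hx
        have hx0 : x ≠ 0 := hx.1
        have hxρ : x ≠ ρ := by
          have := hx.2 ha
          rw [← hρdef] at this
          exact this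
        rcases lt_trichotomy x ρ with h | h | h
        · exact Or.inl h
        · exact absurd h hxρ
        · rcases lt_trichotomy x 0 with h' | h' | h'
          · exact Or.inr (Or.inl ⟨h, h'⟩)
          · exact absurd h' hx0
          · exact Or.inr (Or.inr h')
      have hFc : (({0, ρ} : Finset ℝ).card : ℤ) ≤ 2 := by exact_mod_cast hFcard
      omega
    · exact absurd h0 hρ0
    · -- ρ > 0 : intervals (-∞, 0), (0, ρ), (ρ, ∞)
      have hIio : Multiset.card (g.roots.filter (fun r => r < 0)) ≤ 2 * t - 2 := by
        refine interval_bound_comp g hg (d := 0) (e := -ρ) (show -ρ ≠ 0 from neg_ne_zero.mpr hρ0)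
          (fun r => r < 0) (fun w => by constructor <;> intro h <;> nlinarith)
          f.support (fun m => MvPolynomial.coeff m f * (-ρ) ^ (m 0) * b ^ (m 1))
          (fun m => m 0) (fun m => m 1) ht ?_
        rw [comp_rep f.support (fun m => MvPolynomial.coeff m f) (fun m => m 0) (fun m => m 1)
          a b 0 (-ρ) hrep]
        rw [show (C 0 + C (-ρ) * X : ℝ[X]) = C (-ρ) * X by rw [C_0, zero_add]]
        rw [show (C (a*0+b) + C (a*(-ρ)) * X : ℝ[X]) = C b * (1 + X) by
          rw [show a*0+b = b by ring, show a*(-ρ) = b by rw [mul_neg, haρ]; ring]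
          ring]
        exact csum_of_XY _ _ _ _ _ _
      have hIoi : Multiset.card (g.roots.filter (fun r => ρ < r)) ≤ 2 * t - 2 := by
        refine interval_bound_comp g hg (d := ρ) (e := ρ) (show ρ ≠ 0 from hρ0)
          (fun r => ρ < r) (fun w => by constructor <;> intro h <;> nlinarith)
          f.support (fun m => MvPolynomial.coeff m f * ρ ^ (m 0) * (a*ρ) ^ (m 1))
          (fun m => m 1) (fun m => m 0) ht ?_
        rw [comp_rep f.support (fun m => MvPolynomial.coeff m f) (fun m => m 0) (fun m => m 1)
          a b ρ ρ hrep]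
        rw [show (C ρ + C ρ * X : ℝ[X]) = C ρ * (1 + X) by ring]
        rw [show (C (a*ρ+b) + C (a*ρ) * X : ℝ[X]) = C (a*ρ) * X by
          rw [show a*ρ+b = 0 by rw [haρ]; ring, C_0, zero_add]]
        exact csum_of_YX _ _ _ _ _ _
      have hIoo : Multiset.card (g.roots.filter (fun r => 0 < r ∧ r < ρ)) ≤ 2 * t - 2 := by
        obtain ⟨N, hN1, hN2⟩ : ∃ N : ℕ, (g.comp (C 0 + C ρ * X)).natDegree ≤ N
            ∧ ∀ m ∈ f.support, m 0 + m 1 ≤ N :=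
          ⟨max ((g.comp (C 0 + C ρ * X)).natDegree) (f.support.sup (fun m => m 0 + m 1)),
            le_max_left _ _, fun m hm =>
              le_trans (Finset.le_sup (f := fun m => m 0 + m 1) hm) (le_max_right _ _)⟩
        refine interval_bound_star g hg (d := 0) (e := ρ) (show ρ ≠ 0 from hρ0)
          (fun r => 0 < r ∧ r < ρ)
          (fun w => by constructor <;> intro h <;> constructor <;> nlinarith [h.1, h.2])
          N hN1 f.support
          (fun m => MvPolynomial.coeff m f * ρ ^ (m 0) * (-b) ^ (m 1) * (-1) ^ (m 1))
          (fun m => m 0) (fun m => N - m 0 - m 1) ht ?_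
        rw [comp_rep f.support (fun m => MvPolynomial.coeff m f) (fun m => m 0) (fun m => m 1)
          a b 0 ρ hrep]
        rw [show (C 0 + C ρ * X : ℝ[X]) = C ρ * X by rw [C_0, zero_add]]
        rw [show (C (a*0+b) + C (a*ρ) * X : ℝ[X]) = C (-b) * (X - 1) by
          rw [show a*0+b = b by ring, show a*ρ = -b from haρ, C_neg]
          ring]
        exact star_of_XD f.support (fun m => MvPolynomial.coeff m f)
          (fun m => m 0) (fun m => m 1) ρ (-b) N hN2
      have hsplit : Multiset.card
          (g.roots.filter (fun r => ¬ (r = 0 ∨ (a ≠ 0 ∧ r = -b / a))))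
          ≤ Multiset.card (g.roots.filter (fun r => r < 0))
            + Multiset.card (g.roots.filter (fun r => 0 < r ∧ r < ρ))
            + Multiset.card (g.roots.filter (fun r => ρ < r)) := by
        refine filter_le_three _ _ _ _ _ ?_
        intro x hx
        push_neg at hx
        have hx0 : x ≠ 0 := hx.1
        have hxρ : x ≠ ρ := by
          have := hx.2 ha
          rw [← hρdef] at this
          exact this
        rcases lt_trichotomy x 0 with h | h | h
        · exact Or.inl h
        · exact absurd h hx0
        · rcases lt_trichotomy x ρ with h' | h' | h'
          · exact Or.inr (Or.inl ⟨h, h'⟩)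
          · exact absurd h' hxρ
          · exact Or.inr (Or.inr h')
      have hFc : (({0, ρ} : Finset ℝ).card : ℤ) ≤ 2 := by exact_mod_cast hFcard
      omega
end

section
/- Let f ∈ ℝ[x,y] have at most t nonzero terms. Then the univariate polynomial g(x) = f(x, x+1) either is identically zero or has at most 2t-2 positive real roots counted with multiplicity. -/
namespace DescartesAux

/-- Sign-change counter: `s` is the current sign state (±1). -/
noncomputable def W : ℝ → List ℝ → ℕ
  | _, [] => 0
  | s, a :: l => if s * a < 0 then W (-s) l + 1 else W s l
  termination_by _ l => l.length

@[simp] lemma W_nil (s : ℝ) : W s [] = 0 := by rw [W]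

lemma W_cons (s a : ℝ) (l : List ℝ) :
    W s (a :: l) = if s * a < 0 then W (-s) l + 1 else W s l := by rw [W]

lemma W_cons_neg {s a : ℝ} (h : s * a < 0) (l : List ℝ) :
    W s (a :: l) = W (-s) l + 1 := by rw [W_cons, if_pos h]

lemma W_cons_nonneg {s a : ℝ} (h : ¬ s * a < 0) (l : List ℝ) :
    W s (a :: l) = W s l := by rw [W_cons, if_neg h]

@[simp] lemma W_cons_zero (s : ℝ) (l : List ℝ) : W s (0 :: l) = W s l := by
  rw [W_cons, if_neg]; simp

lemma W_swap (l : List ℝ) : ∀ s : ℝ, W s l ≤ W (-s) l + 1 := by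
  induction l with
  | nil => intro s; simp
  | cons a l ih =>
    intro s
    rcases lt_trichotomy (s * a) 0 with h | h | h
    · have h' : ¬ (-s) * a < 0 := by nlinarith
      rw [W_cons_neg h, W_cons_nonneg h']
    · have h1 : ¬ s * a < 0 := by simp [h]
      have h2 : ¬ (-s) * a < 0 := by
        intro hc; apply absurd hc; simp only [neg_mul, h]; simp
      rw [W_cons_nonneg h1, W_cons_nonneg h2]
      exact ih s
    · have h' : (-s) * a < 0 := by nlinarith
      rw [W_cons_nonneg (by linarith : ¬ s * a < 0), W_cons_neg h', neg_neg]
      omega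

lemma W_zero_list {l : List ℝ} (hl : ∀ x ∈ l, x = 0) (s : ℝ) : W s l = 0 := by
  induction l with
  | nil => simp
  | cons a l ih =>
    have ha : a = 0 := hl a (List.mem_cons_self)
    subst ha
    rw [W_cons_zero]
    exact ih (fun x hx => hl x (List.mem_cons_of_mem _ hx))

/-- coefficients (top-down) of `(X + c) * p`, carrying the previous (higher) coefficient. -/
noncomputable def go (c : ℝ) : ℝ → List ℝ → List ℝ
  | prev, [] => [c * prev]
  | prev, a :: l => (a + c * prev) :: go c a l

@[simp] lemma go_nil (c prev : ℝ) : go c prev [] = [c * prev] := rfl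
@[simp] lemma go_cons (c prev a : ℝ) (l : List ℝ) :
    go c prev (a :: l) = (a + c * prev) :: go c a l := rfl

@[simp] lemma go_length (c : ℝ) : ∀ (prev : ℝ) (l : List ℝ),
    (go c prev l).length = l.length + 1 := by
  intro prev l
  induction l generalizing prev with
  | nil => rfl
  | cons a l ih => simp [ih]

/-- Multiplying by `(x + c)`, `c > 0`, does not increase sign changes. -/
lemma W_go_le {c : ℝ} (hc : 0 < c) :
    ∀ (l : List ℝ) (prev s : ℝ), (s = 1 ∨ s = -1) → 0 ≤ s * prev →
      W s (go c prev l) ≤ W s l := by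
  intro l
  induction l with
  | nil =>
    intro prev s hs hsp
    have h : ¬ s * (c * prev) < 0 := by nlinarith
    rw [go_nil, W_cons_nonneg h, W_nil]
  | cons a l ih =>
    intro prev s hs hsp
    have hs' : -s = 1 ∨ -s = -1 := by rcases hs with h | h <;> simp [h]
    rw [go_cons]
    by_cases ha : s * a < 0
    · rw [W_cons_neg ha]
      have hihm : W (-s) (go c a l) ≤ W (-s) l := ih a (-s) hs' (by nlinarith)
      by_cases hh : s * (a + c * prev) < 0
      · rw [W_cons_neg hh]; omega
      · rw [W_cons_nonneg hh]
        calc W s (go c a l) ≤ W (-s) (go c a l) + 1 := W_swap _ s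
          _ ≤ W (-s) l + 1 := by omega
    · rw [W_cons_nonneg ha]
      have hsa : 0 ≤ s * a := not_lt.1 ha
      have hh : ¬ s * (a + c * prev) < 0 := by nlinarith
      rw [W_cons_nonneg hh]
      exact ih a s hs hsa

lemma exists_ne_cons {a : ℝ} {l : List ℝ} :
    (∃ x ∈ a :: l, x ≠ 0) ↔ a ≠ 0 ∨ ∃ x ∈ l, x ≠ 0 := by
  simp [List.exists_mem_cons_iff]

/-- Multiplying by `(x - r)`, `r > 0`, increases the sign-change count by at least 1. -/
lemma W_go_ge {r : ℝ} (hr : 0 < r) :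
    ∀ (l : List ℝ) (prev s : ℝ), (s = 1 ∨ s = -1) → 0 ≤ s * prev →
      W s l + (if prev ≠ 0 ∨ ∃ x ∈ l, x ≠ 0 then 1 else 0) ≤ W s (go (-r) prev l) := by
  intro l
  induction l with
  | nil =>
    intro prev s hs hsp
    by_cases hp : prev = 0
    · simp [hp]
    · have hs0 : s ≠ 0 := by rcases hs with h | h <;> simp [h]
      have hsp' : 0 < s * prev := lt_of_le_of_ne hsp (by simp [mul_ne_zero hs0 hp, Ne, eq_comm])
      have hlt : s * (-r * prev) < 0 := by nlinarith
      rw [go_nil, W_cons_neg hlt, W_nil, W_nil, if_pos (Or.inl hp)]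
  | cons a l ih =>
    intro prev s hs hsp
    have hs' : -s = 1 ∨ -s = -1 := by rcases hs with h | h <;> simp [h]
    have hs0 : s ≠ 0 := by rcases hs with h | h <;> simp [h]
    rw [go_cons]
    rcases lt_trichotomy (s * a) 0 with ha | ha | ha
    · -- a has sign opposite to s
      have ha0 : a ≠ 0 := by rintro rfl; simp at ha
      have hh : s * (a + -r * prev) < 0 := by nlinarith
      rw [W_cons_neg ha, W_cons_neg hh]
      have hIH := ih a (-s) hs' (by nlinarith)
      rw [if_pos (Or.inl ha0)] at hIH
      have hcond : prev ≠ 0 ∨ ∃ x ∈ a :: l, x ≠ 0 :=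
        Or.inr (exists_ne_cons.2 (Or.inl ha0))
      rw [if_pos hcond]
      omega
    · -- a = 0
      have ha0 : a = 0 := by
        rcases mul_eq_zero.1 ha with h | h
        · exact absurd h hs0
        · exact h
      subst ha0
      rw [W_cons_zero]
      by_cases hp : prev = 0
      · subst hp
        have hh : ¬ s * (0 + -r * 0) < 0 := by norm_num
        rw [W_cons_nonneg hh]
        have hIH := ih 0 s hs (by simp)
        by_cases hl : ∃ x ∈ l, x ≠ 0
        · rw [if_pos (Or.inr hl)] at hIH
          rw [if_pos (Or.inr (exists_ne_cons.2 (Or.inr hl)))]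
          exact hIH
        · have hcond : ¬ ((0:ℝ) ≠ 0 ∨ ∃ x ∈ (0:ℝ) :: l, x ≠ 0) := by
            push_neg
            refine ⟨rfl, fun x hx => ?_⟩
            rcases List.mem_cons.1 hx with h | h
            · exact h
            · push_neg at hl
              exact hl x h
          rw [if_neg hcond]
          have h0 : W s l = 0 := W_zero_list (by push_neg at hl; exact hl) s
          omega
      · have hsp' : 0 < s * prev := lt_of_le_of_ne hsp (by simp [mul_ne_zero hs0 hp, Ne, eq_comm])
        have hh : s * (0 + -r * prev) < 0 := by nlinarith
        rw [W_cons_neg hh]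
        have hIH := ih 0 (-s) hs' (by simp)
        rw [if_pos (Or.inl hp)]
        by_cases hl : ∃ x ∈ l, x ≠ 0
        · rw [if_pos (Or.inr hl)] at hIH
          have hsw := W_swap l s
          omega
        · have hWl : W s l = 0 := W_zero_list (by push_neg at hl; simpa using hl) s
          omega
    · -- a has sign s
      have ha0 : a ≠ 0 := by rintro rfl; simp at ha
      rw [W_cons_nonneg (by linarith : ¬ s * a < 0)]
      have hIH := ih a s hs (le_of_lt ha)
      rw [if_pos (Or.inl ha0)] at hIH
      rw [if_pos (Or.inr (exists_ne_cons.2 (Or.inl ha0)))]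
      by_cases hh : s * (a + -r * prev) < 0
      · rw [W_cons_neg hh]
        have hsw := W_swap (go (-r) a l) s
        omega
      · rw [W_cons_nonneg hh]
        omega

/-- Sign variation count of a coefficient list. -/
noncomputable def V (l : List ℝ) : ℕ := min (W 1 l) (W (-1) l)

lemma V_le_W {s : ℝ} (hs : s = 1 ∨ s = -1) (l : List ℝ) : V l ≤ W s l := by
  rcases hs with h | h <;> subst h
  · exact min_le_left _ _
  · exact min_le_right _ _

lemma V_go_le {c : ℝ} (hc : 0 < c) (l : List ℝ) : V (go c 0 l) ≤ V l := by
  have h1 : W 1 (go c 0 l) ≤ W 1 l := W_go_le hc l 0 1 (Or.inl rfl) (by simp)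
  have h2 : W (-1) (go c 0 l) ≤ W (-1) l := W_go_le hc l 0 (-1) (Or.inr rfl) (by simp)
  exact min_le_min h1 h2

lemma V_go_ge {r : ℝ} (hr : 0 < r) {l : List ℝ} (hl : ∃ x ∈ l, x ≠ 0) :
    V l + 1 ≤ V (go (-r) 0 l) := by
  have key : ∀ s : ℝ, s = 1 ∨ s = -1 → V l + 1 ≤ W s (go (-r) 0 l) := by
    intro s hs
    have h := W_go_ge hr l 0 s hs (by simp)
    rw [if_pos (Or.inr hl)] at h
    have := V_le_W hs l
    omega
  have h1 := key 1 (Or.inl rfl)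
  have h2 := key (-1) (Or.inr rfl)
  exact le_min h1 h2

/-- Final sign state after scanning `l` starting with state `s`. -/
noncomputable def fs : ℝ → List ℝ → ℝ
  | s, [] => s
  | s, a :: l => if s * a < 0 then fs (-s) l else fs s l
  termination_by _ l => l.length

@[simp] lemma fs_nil (s : ℝ) : fs s [] = s := by rw [fs]

lemma fs_cons (s a : ℝ) (l : List ℝ) :
    fs s (a :: l) = if s * a < 0 then fs (-s) l else fs s l := by rw [fs]

lemma W_append : ∀ (l1 : List ℝ) (s : ℝ) (l2 : List ℝ),
    W s (l1 ++ l2) = W s l1 + W (fs s l1) l2 := by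
  intro l1
  induction l1 with
  | nil => intro s l2; simp
  | cons a l1 ih =>
    intro s l2
    rw [List.cons_append, W_cons, W_cons, fs_cons]
    by_cases h : s * a < 0
    · rw [if_pos h, if_pos h, if_pos h, ih]; omega
    · rw [if_neg h, if_neg h, if_neg h, ih]

lemma W_cons_le_cons (t x y : ℝ) (l : List ℝ) :
    W t (x :: l) ≤ W t (y :: l) + 2 := by
  by_cases hx : t * x < 0 <;> by_cases hy : t * y < 0
  · rw [W_cons_neg hx, W_cons_neg hy]; omega
  · rw [W_cons_neg hx, W_cons_nonneg hy]
    have := W_swap l (-t)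
    rw [neg_neg] at this
    omega
  · rw [W_cons_nonneg hx, W_cons_neg hy]
    have := W_swap l t
    omega
  · rw [W_cons_nonneg hx, W_cons_nonneg hy]; omega

/-- Changing one entry of a list increases sign variations by at most 2. -/
lemma V_middle (l1 l2 : List ℝ) (x y : ℝ) :
    V (l1 ++ x :: l2) ≤ V (l1 ++ y :: l2) + 2 := by
  have key : ∀ s : ℝ, W s (l1 ++ x :: l2) ≤ W s (l1 ++ y :: l2) + 2 := by
    intro s
    rw [W_append, W_append]
    have := W_cons_le_cons (fs s l1) x y l2
    omega
  have h1 := key 1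
  have h2 := key (-1)
  unfold V
  omega

open Polynomial

noncomputable def toP (l : List ℝ) : ℝ[X] := l.foldl (fun q a => q * X + C a) 0

lemma foldl_toP : ∀ (l : List ℝ) (q : ℝ[X]),
    l.foldl (fun q a => q * X + C a) q = q * X ^ l.length + toP l := by
  intro l
  induction l with
  | nil => intro q; simp [toP]
  | cons a l ih =>
    intro q
    rw [List.foldl_cons, ih]
    have h2 : toP (a :: l) = C a * X ^ l.length + toP l := by
      unfold toP
      rw [List.foldl_cons, ih (0 * X + C a)]
      unfold toP
      ring
    rw [h2]
    simp only [List.length_cons]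
    ring

@[simp] lemma toP_nil : toP [] = 0 := rfl

lemma toP_cons (a : ℝ) (l : List ℝ) : toP (a :: l) = C a * X ^ l.length + toP l := by
  unfold toP
  rw [List.foldl_cons, foldl_toP]
  unfold toP
  ring

lemma degree_toP (l : List ℝ) : (toP l).degree < (l.length : ℕ) := by
  induction l with
  | nil => simp [toP]
  | cons a l ih =>
    rw [toP_cons]
    refine lt_of_le_of_lt (degree_add_le _ _) (max_lt ?_ ?_)
    · exact lt_of_le_of_lt (degree_C_mul_X_pow_le _ _) (by
        simp only [List.length_cons]
        exact_mod_cast Nat.lt_succ_self _)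
    · exact lt_of_lt_of_le ih (by
        simp only [List.length_cons]
        exact_mod_cast Nat.le_succ _)

lemma coeff_toP_high (l : List ℝ) {i : ℕ} (h : l.length ≤ i) : (toP l).coeff i = 0 :=
  coeff_eq_zero_of_degree_lt (lt_of_lt_of_le (degree_toP l) (by exact_mod_cast h))

lemma toP_go (c : ℝ) : ∀ (l : List ℝ) (prev : ℝ),
    toP (go c prev l) = (X + C c) * toP l + C (c * prev) * X ^ l.length := by
  intro l
  induction l with
  | nil => intro prev; simp [toP_cons]
  | cons a l ih =>
    intro prev
    rw [go_cons, toP_cons, ih, go_length]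
    rw [toP_cons]
    simp only [List.length_cons, C_add, C_mul]
    ring

noncomputable def L : ℕ → ℝ[X] → List ℝ
  | 0, _ => []
  | m + 1, p => p.coeff m :: L m p

@[simp] lemma L_zero (p : ℝ[X]) : L 0 p = [] := rfl
@[simp] lemma L_succ (m : ℕ) (p : ℝ[X]) : L (m + 1) p = p.coeff m :: L m p := rfl

@[simp] lemma L_length : ∀ (m : ℕ) (p : ℝ[X]), (L m p).length = m := by
  intro m
  induction m with
  | zero => intro p; rfl
  | succ m ih => intro p; simp [ih]

lemma toP_L : ∀ (m : ℕ) (p : ℝ[X]), toP (L m p) = ∑ i ∈ Finset.range m, C (p.coeff i) * X ^ i := by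
  intro m
  induction m with
  | zero => intro p; simp
  | succ m ih =>
    intro p
    rw [L_succ, toP_cons, ih, L_length, Finset.sum_range_succ]
    ring

lemma toP_L_self {m : ℕ} {p : ℝ[X]} (h : p.natDegree < m) : toP (L m p) = p := by
  rw [toP_L]
  conv_rhs => rw [p.as_sum_range' m h]
  refine Finset.sum_congr rfl fun i _ => ?_
  rw [C_mul_X_pow_eq_monomial]

lemma mem_L : ∀ (m : ℕ) (p : ℝ[X]) (x : ℝ), x ∈ L m p → ∃ i, x = p.coeff i := by
  intro m
  induction m with
  | zero => intro p x hx; simp at hx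
  | succ m ih =>
    intro p x hx
    rw [L_succ, List.mem_cons] at hx
    rcases hx with h | h
    · exact ⟨m, h⟩
    · exact ih p x h

lemma L_congr : ∀ (m : ℕ) (p q : ℝ[X]), (∀ i, i < m → p.coeff i = q.coeff i) → L m p = L m q := by
  intro m
  induction m with
  | zero => intro p q _; rfl
  | succ m ih =>
    intro p q h
    rw [L_succ, L_succ, h m (Nat.lt_succ_self m), ih p q (fun i hi => h i (by omega))]

noncomputable def Vp (p : ℝ[X]) : ℕ := V (L (p.natDegree + 1) p)

lemma V_cons_zero (l : List ℝ) : V ((0:ℝ) :: l) = V l := by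
  unfold V
  rw [W_cons_zero, W_cons_zero]

lemma V_L_eq {p : ℝ[X]} : ∀ {m : ℕ}, p.natDegree < m → V (L m p) = Vp p := by
  intro m
  induction m with
  | zero => omega
  | succ m ih =>
    intro h
    rcases Nat.lt_or_ge p.natDegree m with h1 | h1
    · rw [L_succ, coeff_eq_zero_of_natDegree_lt h1, V_cons_zero, ih h1]
    · have : m = p.natDegree := by omega
      subst this
      rfl

lemma L_toP : ∀ l : List ℝ, L l.length (toP l) = l := by
  intro l
  induction l with
  | nil => rfl
  | cons a l ih =>
    simp only [List.length_cons, L_succ]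
    have h1 : (toP (a :: l)).coeff l.length = a := by
      rw [toP_cons, coeff_add, coeff_toP_high l le_rfl, coeff_C_mul, coeff_X_pow,
        if_pos rfl]
      ring
    have h2 : L l.length (toP (a :: l)) = L l.length (toP l) := by
      refine L_congr _ _ _ fun i hi => ?_
      rw [toP_cons, coeff_add, coeff_C_mul, coeff_X_pow, if_neg (by omega)]
      ring
    rw [h1, h2, ih]

lemma V_eq_Vp_toP (l : List ℝ) : V l = Vp (toP l) := by
  by_cases h0 : toP l = 0
  · have hl : ∀ x ∈ l, x = 0 := by
      intro x hx
      conv at hx => rw [← L_toP l]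
      obtain ⟨i, hi⟩ := mem_L _ _ _ hx
      rw [hi, h0, coeff_zero]
    have h1 : V l = 0 := by
      unfold V
      rw [W_zero_list hl, W_zero_list hl]
      exact min_self 0
    have h2 : Vp (toP l) = 0 := by
      rw [h0]
      unfold Vp V
      have : L (natDegree (0:ℝ[X]) + 1) (0:ℝ[X]) = [(0:ℝ)] := by simp
      rw [this, W_cons_zero, W_cons_zero, W_nil]
      omega
    rw [h1, h2]
  · have hdeg : (toP l).natDegree < l.length := by
      rw [natDegree_lt_iff_degree_lt h0]
      exact_mod_cast degree_toP l
    rw [← V_L_eq hdeg, L_toP]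

lemma Vp_mul_X_add_C {c : ℝ} (hc : 0 < c) (p : ℝ[X]) : Vp ((X + C c) * p) ≤ Vp p := by
  set l := L (p.natDegree + 1) p with hl
  have hp : toP l = p := toP_L_self (Nat.lt_succ_self _)
  have hgo : toP (go c 0 l) = (X + C c) * p := by
    rw [toP_go, hp]
    simp
  calc Vp ((X + C c) * p) = V (go c 0 l) := by rw [V_eq_Vp_toP, hgo]
    _ ≤ V l := V_go_le hc l
    _ = Vp p := by rw [V_eq_Vp_toP, hp]

lemma Vp_mul_X_sub_C {r : ℝ} (hr : 0 < r) {p : ℝ[X]} (hp : p ≠ 0) :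
    Vp p + 1 ≤ Vp ((X - C r) * p) := by
  set l := L (p.natDegree + 1) p with hl
  have hpl : toP l = p := toP_L_self (Nat.lt_succ_self _)
  have hne : ∃ x ∈ l, x ≠ 0 := by
    refine ⟨p.coeff p.natDegree, ?_, ?_⟩
    · rw [hl, L_succ]
      exact List.mem_cons_self
    · rw [← leadingCoeff]
      exact leadingCoeff_ne_zero.2 hp
  have hgo : toP (go (-r) 0 l) = (X - C r) * p := by
    rw [toP_go, hpl]
    simp [sub_eq_add_neg]
  calc Vp p + 1 = V l + 1 := by rw [V_eq_Vp_toP, hpl]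
    _ ≤ V (go (-r) 0 l) := V_go_ge hr hne
    _ = Vp ((X - C r) * p) := by rw [V_eq_Vp_toP, hgo]

lemma Vp_pow_mul (b : ℕ) (p : ℝ[X]) : Vp ((X + 1) ^ b * p) ≤ Vp p := by
  induction b with
  | zero => simp
  | succ b ih =>
    have h : (X + 1 : ℝ[X]) ^ (b + 1) * p = (X + C 1) * ((X + 1) ^ b * p) := by
      rw [C_1]; ring
    rw [h]
    exact le_trans (Vp_mul_X_add_C one_pos _) ih

lemma W_one_of_nonneg {l : List ℝ} (h : ∀ x ∈ l, 0 ≤ x) : W 1 l = 0 := by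
  induction l with
  | nil => simp
  | cons a l ih =>
    rw [W_cons_nonneg (by
      have := h a (List.mem_cons_self)
      nlinarith)]
    exact ih fun x hx => h x (List.mem_cons_of_mem _ hx)

lemma W_negone_of_nonpos {l : List ℝ} (h : ∀ x ∈ l, x ≤ 0) : W (-1) l = 0 := by
  induction l with
  | nil => simp
  | cons a l ih =>
    rw [W_cons_nonneg (by
      have := h a (List.mem_cons_self)
      nlinarith)]
    exact ih fun x hx => h x (List.mem_cons_of_mem _ hx)

lemma Vp_monomial (c : ℝ) (a : ℕ) : Vp (C c * X ^ a) = 0 := by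
  have hcoeff : ∀ i, (C c * X ^ a).coeff i = if i = a then c else 0 := by
    intro i
    rw [coeff_C_mul, coeff_X_pow]
    split <;> simp_all
  rcases le_or_gt 0 c with hc | hc
  · have : W 1 (L (natDegree (C c * X ^ a) + 1) (C c * X ^ a)) = 0 := by
      refine W_one_of_nonneg fun x hx => ?_
      obtain ⟨i, hi⟩ := mem_L _ _ _ hx
      rw [hi, hcoeff]
      split <;> simp [hc]
    unfold Vp V
    omega
  · have : W (-1) (L (natDegree (C c * X ^ a) + 1) (C c * X ^ a)) = 0 := by
      refine W_negone_of_nonpos fun x hx => ?_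
      obtain ⟨i, hi⟩ := mem_L _ _ _ hx
      rw [hi, hcoeff]
      split <;> simp [le_of_lt hc]
    unfold Vp V
    omega

/-- Descartes' rule of signs (weak form). -/
lemma descartes : ∀ (n : ℕ) (p : ℝ[X]), p.natDegree = n → p ≠ 0 →
    Multiset.card (p.roots.filter (fun r => 0 < r)) ≤ Vp p := by
  intro n
  induction n using Nat.strong_induction_on with
  | _ n ih =>
    intro p hn hp
    by_cases hroot : ∃ r ∈ p.roots, 0 < r
    · obtain ⟨r, hr, hrpos⟩ := hroot
      obtain ⟨q, hq⟩ := dvd_iff_isRoot.2 (isRoot_of_mem_roots hr)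
      have hq0 : q ≠ 0 := by rintro rfl; rw [mul_zero] at hq; exact hp hq
      have hXr : (X - C r : ℝ[X]) ≠ 0 := X_sub_C_ne_zero r
      have hdegq : q.natDegree < n := by
        have h1 : p.natDegree = 1 + q.natDegree := by
          rw [hq, natDegree_mul hXr hq0, natDegree_X_sub_C]
        omega
      have hroots : p.roots = {r} + q.roots := by
        rw [hq, roots_mul (hq ▸ hp), roots_X_sub_C]
      have hcard : Multiset.card (p.roots.filter (fun r => 0 < r)) =
          Multiset.card (q.roots.filter (fun r => 0 < r)) + 1 := by
        rw [hroots, Multiset.filter_add, Multiset.card_add,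
          Multiset.filter_singleton, if_pos hrpos]
        simp [add_comm]
      rw [hcard, hq]
      have := ih q.natDegree hdegq q rfl hq0
      have h2 := Vp_mul_X_sub_C hrpos hq0
      omega
    · push_neg at hroot
      have : p.roots.filter (fun r => 0 < r) = 0 := Multiset.filter_eq_nil.2 (fun a ha => not_lt.2 (hroot a ha))
      rw [this]
      simp

lemma L_split (n : ℕ) (p q : ℝ[X]) (h : ∀ i, i ≠ n → p.coeff i = q.coeff i) :
    ∀ m, n < m → ∃ l1 l2, L m p = l1 ++ p.coeff n :: l2 ∧ L m q = l1 ++ q.coeff n :: l2 := by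
  intro m
  induction m with
  | zero => omega
  | succ m ihm =>
    intro hm
    rcases Nat.lt_or_ge n m with h1 | h1
    · obtain ⟨l1, l2, e1, e2⟩ := ihm h1
      refine ⟨p.coeff m :: l1, l2, by rw [L_succ, e1]; rfl, ?_⟩
      rw [L_succ, e2, h m (by omega)]
      rfl
    · have : m = n := by omega
      subst this
      exact ⟨[], L m p, rfl, by
        rw [L_succ, L_congr m q p (fun i hi => (h i (by omega)).symm)]
        rfl⟩

lemma Vp_add_monomial (p : ℝ[X]) (c : ℝ) (n : ℕ) : Vp (p + C c * X ^ n) ≤ Vp p + 2 := by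
  set q := p + C c * X ^ n with hq
  set m := max (max p.natDegree q.natDegree) n + 1 with hm
  have hne : ∀ i, i ≠ n → q.coeff i = p.coeff i := by
    intro i hi
    rw [hq, coeff_add, coeff_C_mul, coeff_X_pow, if_neg (fun hh => hi hh), mul_zero, add_zero]
  obtain ⟨l1, l2, e1, e2⟩ := L_split n q p hne m (by omega)
  have h1 : V (L m q) ≤ V (L m p) + 2 := by
    rw [e1, e2]
    exact V_middle l1 l2 _ _
  rw [V_L_eq (by omega : q.natDegree < m), V_L_eq (by omega : p.natDegree < m)] at h1
  exact h1

/-- Main bound: a sum of `t` terms of the form `c·xᵃ(x+1)ᵇ` has at most `2t-2`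
sign variations. -/
lemma main_bound {ι : Type*} [DecidableEq ι] :
    ∀ (t : ℕ) (s : Finset ι) (c : ι → ℝ) (a b : ι → ℕ), s.card = t → s.Nonempty →
      Vp (∑ i ∈ s, C (c i) * X ^ (a i) * (X + 1) ^ (b i)) ≤ 2 * t - 2 := by
  intro t
  induction t with
  | zero =>
    intro s c a b hcard hne
    rw [Finset.card_eq_zero] at hcard
    subst hcard
    exact absurd hne (by simp)
  | succ t ih =>
    intro s c a b hcard hne
    obtain ⟨i0, hi0, hmin⟩ := s.exists_min_image b hne
    have hsum : ∑ i ∈ s, C (c i) * X ^ (a i) * (X + 1) ^ (b i) =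
        (X + 1) ^ (b i0) * ∑ i ∈ s, C (c i) * X ^ (a i) * (X + 1) ^ (b i - b i0) := by
      rw [Finset.mul_sum]
      refine Finset.sum_congr rfl fun i hi => ?_
      have hbe : b i0 + (b i - b i0) = b i := by
        have := hmin i hi
        omega
      have h2 : (X + 1 : ℝ[X]) ^ (b i0) * (X + 1) ^ (b i - b i0) = (X + 1) ^ (b i) := by
        rw [← pow_add, hbe]
      rw [← h2]
      ring
    rw [hsum]
    refine le_trans (Vp_pow_mul _ _) ?_
    have hsplit : ∑ i ∈ s, C (c i) * X ^ (a i) * (X + 1) ^ (b i - b i0) =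
        (∑ i ∈ s.erase i0, C (c i) * X ^ (a i) * (X + 1) ^ (b i - b i0))
          + C (c i0) * X ^ (a i0) := by
      rw [← Finset.sum_erase_add s _ hi0]
      congr 1
      rw [Nat.sub_self, pow_zero, mul_one]
    rw [hsplit]
    rcases Finset.eq_empty_or_nonempty (s.erase i0) with he | he
    · rw [he, Finset.sum_empty, zero_add, Vp_monomial]
      omega
    · have hcard' : (s.erase i0).card = t := by
        rw [Finset.card_erase_of_mem hi0, hcard]
        omega
      have ht1 : 1 ≤ t := by
        have := Finset.card_pos.2 he
        omega
      have hIH : Vp (∑ i ∈ s.erase i0, C (c i) * X ^ (a i) * (X + 1) ^ (b i - b i0)) ≤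
          2 * t - 2 := ih (s.erase i0) c a (fun i => b i - b i0) hcard' he
      have hB := Vp_add_monomial
        (∑ i ∈ s.erase i0, C (c i) * X ^ (a i) * (X + 1) ^ (b i - b i0)) (c i0) (a i0)
      omega

end DescartesAux




open Polynomial

/-- If `f` is a real bivariate polynomial with at most `t` nonzero terms, then
`g(x) = f(x, x+1)` is either identically zero or has at most `2t - 2` positive
real roots counted with multiplicity. -/
theorem pos_roots_subst_le (f : MvPolynomial (Fin 2) ℝ) (t : ℕ)
    (ht : f.support.card ≤ t) :
    (MvPolynomial.aeval ![X, X + 1] f : Polynomial ℝ) = 0 ∨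
    (((MvPolynomial.aeval ![X, X + 1] f : Polynomial ℝ).roots.filter
        (fun r => 0 < r)).card : ℤ) ≤ 2 * t - 2 := by
  by_cases h0 : (MvPolynomial.aeval ![X, X + 1] f : Polynomial ℝ) = 0
  · exact Or.inl h0
  right
  set g : ℝ[X] := MvPolynomial.aeval ![X, X + 1] f with hg
  have hf : f ≠ 0 := by
    rintro rfl
    exact h0 (map_zero _)
  have hsupp : f.support.Nonempty := MvPolynomial.support_nonempty.2 hf
  have hgsum : g = ∑ d ∈ f.support,
      C (MvPolynomial.coeff d f) * X ^ (d 0) * (X + 1) ^ (d 1) := by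
    rw [hg]
    conv_lhs => rw [f.as_sum]
    rw [map_sum]
    refine Finset.sum_congr rfl fun d _ => ?_
    rw [MvPolynomial.aeval_monomial]
    rw [Finsupp.prod_fintype _ _ (fun i => pow_zero _)]
    rw [Fin.prod_univ_two]
    simp only [Matrix.cons_val_zero, Matrix.cons_val_one, Matrix.head_cons]
    rw [mul_assoc]
    rfl
  have hmain : DescartesAux.Vp g ≤ 2 * f.support.card - 2 := by
    rw [hgsum]
    exact DescartesAux.main_bound f.support.card f.support
      (fun d => MvPolynomial.coeff d f) (fun d => d 0) (fun d => d 1) rfl hsupp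
  have hdesc : Multiset.card (g.roots.filter (fun r => 0 < r)) ≤ DescartesAux.Vp g :=
    DescartesAux.descartes g.natDegree g rfl h0
  have hone : 1 ≤ f.support.card := Finset.card_pos.2 hsupp
  omega
end
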